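/- arXiv:2508.01190 — 7 statements merged into one kernel-verified Lean document; each statement's English description precedes it below -/
import Mathlib

section
/- Let n = 2m with m a positive integer. Every element x of F_{2^n} that does not lie in the subfield F_{2^m} can be written uniquely as x = v1(v2+1)/(v1+v2), where v1 and v2 are elements of μ_{2^m+1} \ {1} with v1 ≠ v2. That is, the map (v1,v2) ↦ v1(v2+1)/(v1+v2) is a bijection from {(v1,v2) : v1,v2 ∈ μ_{2^m+1}\{1}, v1 ≠ v2} onto F_{2^n} \ F_{2^m}. -/
section Aux
variable (m : ℕ)

private abbrev F2 (m : ℕ) := GaloisField 2 (2 * m)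

private lemma aux_frob2 (hm : 0 < m) (x : F2 m) : (x ^ 2 ^ m) ^ 2 ^ m = x := by
  haveI : Fintype (F2 m) := Fintype.ofFinite _
  have hc : Fintype.card (F2 m) = 2 ^ (2 * m) := by
    rw [← Nat.card_eq_fintype_card]; exact GaloisField.card 2 (2 * m) (by omega)
  have h := FiniteField.pow_card x
  rw [hc] at h
  rw [← pow_mul]
  have e : 2 ^ m * 2 ^ m = 2 ^ (2 * m) := by rw [← pow_add, two_mul]
  rw [e]; exact h

private lemma aux_addne {a b : F2 m} (h : a ≠ b) : a + b ≠ 0 := fun h0 =>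
  h (by rwa [← CharTwo.sub_eq_add, sub_eq_zero] at h0)

private lemma aux_frobadd (a b : F2 m) : (a + b) ^ 2 ^ m = a ^ 2 ^ m + b ^ 2 ^ m :=
  add_pow_char_pow ..

/-- key computation: Frobenius of the map value -/
private lemma aux_phi {v1 v2 : F2 m} (h1 : v1 ^ (2 ^ m + 1) = 1) (h2 : v2 ^ (2 ^ m + 1) = 1)
    (hv1 : v1 ≠ 0) (hv2 : v2 ≠ 0) (hs : v1 + v2 ≠ 0) :
    (v1 * (v2 + 1) / (v1 + v2)) ^ 2 ^ m = (v2 + 1) / (v1 + v2) := by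
  have hv1m : v1 ^ 2 ^ m = v1⁻¹ := by
    rw [pow_succ] at h1; exact eq_inv_of_mul_eq_one_left h1
  have hv2m : v2 ^ 2 ^ m = v2⁻¹ := by
    rw [pow_succ] at h2; exact eq_inv_of_mul_eq_one_left h2
  have hsinv : v1⁻¹ + v2⁻¹ ≠ 0 := by
    intro h0
    apply hs
    have := mul_eq_zero_of_right (v1 * v2) h0
    rw [mul_add] at this
    field_simp at this
    rw [add_comm] at this
    simpa using this
  rw [div_pow, mul_pow, aux_frobadd, aux_frobadd, hv1m, hv2m, one_pow]
  rw [div_eq_div_iff hsinv hs]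
  field_simp
  ring

end Aux

/-- Lemma (unit-circle parametrization): for `n = 2m`, the map
`(v₁, v₂) ↦ v₁(v₂+1)/(v₁+v₂)` is a bijection from the set of pairs of distinct elements of
`μ_{2^m+1} \ {1}` onto `F_{2^n} \ F_{2^m}`, where the subfield `F_{2^m}` of `F_{2^n}` is
`{x : x^{2^m} = x}`. -/
theorem stmt0 (m : ℕ) (hm : 0 < m) :
    Set.BijOn
      (fun p : GaloisField 2 (2 * m) × GaloisField 2 (2 * m) =>
        p.1 * (p.2 + 1) / (p.1 + p.2))
      {p : GaloisField 2 (2 * m) × GaloisField 2 (2 * m) |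
        p.1 ^ (2 ^ m + 1) = 1 ∧ p.2 ^ (2 ^ m + 1) = 1 ∧ p.1 ≠ 1 ∧ p.2 ≠ 1 ∧ p.1 ≠ p.2}
      {x : GaloisField 2 (2 * m) | x ^ (2 ^ m) ≠ x} := by
  have h2z : (2 : GaloisField 2 (2 * m)) = 0 := CharTwo.two_eq_zero
  refine ⟨?_, ?_, ?_⟩
  · -- MapsTo
    rintro ⟨v1, v2⟩ ⟨h1, h2', hn1, hn2, hne⟩
    simp only [Set.mem_setOf_eq]
    have hv1 : v1 ≠ 0 := by rintro rfl; rw [zero_pow (Nat.succ_ne_zero _)] at h1; exact one_ne_zero h1.symm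
    have hv2 : v2 ≠ 0 := by rintro rfl; rw [zero_pow (Nat.succ_ne_zero _)] at h2'; exact one_ne_zero h2'.symm
    have hs : v1 + v2 ≠ 0 := aux_addne m hne
    have hφ := aux_phi m h1 h2' hv1 hv2 hs
    intro heq
    rw [hφ] at heq
    have hd : (v2 + 1) / (v1 + v2) ≠ 0 := div_ne_zero (aux_addne m hn2) hs
    apply hn1
    have hmm : v1 * ((v2 + 1) / (v1 + v2)) = 1 * ((v2 + 1) / (v1 + v2)) := by
      rw [one_mul, ← mul_div_assoc]; exact heq.symm
    exact mul_right_cancel₀ hd hmm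
  · -- InjOn
    rintro ⟨a1, a2⟩ ⟨h1a, h2a, hn1a, hn2a, hnea⟩ ⟨b1, b2⟩ ⟨h1b, h2b, hn1b, hn2b, hneb⟩ heq
    simp only at heq
    have hv1a : a1 ≠ 0 := by rintro rfl; rw [zero_pow (Nat.succ_ne_zero _)] at h1a; exact one_ne_zero h1a.symm
    have hv2a : a2 ≠ 0 := by rintro rfl; rw [zero_pow (Nat.succ_ne_zero _)] at h2a; exact one_ne_zero h2a.symm
    have hv1b : b1 ≠ 0 := by rintro rfl; rw [zero_pow (Nat.succ_ne_zero _)] at h1b; exact one_ne_zero h1b.symm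
    have hv2b : b2 ≠ 0 := by rintro rfl; rw [zero_pow (Nat.succ_ne_zero _)] at h2b; exact one_ne_zero h2b.symm
    have hsa : a1 + a2 ≠ 0 := aux_addne m hnea
    have hsb : b1 + b2 ≠ 0 := aux_addne m hneb
    have hφa := aux_phi m h1a h2a hv1a hv2a hsa
    have hφb := aux_phi m h1b h2b hv1b hv2b hsb
    have hda : (a2 + 1) / (a1 + a2) ≠ 0 := div_ne_zero (aux_addne m hn2a) hsa
    have e2 : (a2 + 1) / (a1 + a2) = (b2 + 1) / (b1 + b2) := by
      rw [← hφa, ← hφb, heq]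
    have e1 : a1 * ((a2 + 1) / (a1 + a2)) = b1 * ((b2 + 1) / (b1 + b2)) := by
      rw [← mul_div_assoc, ← mul_div_assoc]; exact heq
    rw [← e2] at e1
    have hab1 : a1 = b1 := mul_right_cancel₀ hda e1
    subst hab1
    rw [div_eq_div_iff hsa hsb] at heq
    have key : a1 * (a1 - 1) * (a2 - b2) = 0 := by linear_combination heq
    have h22 : a2 = b2 := by
      rcases mul_eq_zero.mp key with h | h
      · rcases mul_eq_zero.mp h with h' | h'
        · exact absurd h' hv1a
        · exact absurd (by linear_combination h') hn1a
      · linear_combination h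
    rw [h22]
  · -- SurjOn
    intro x hx
    simp only [Set.mem_setOf_eq] at hx ⊢
    set y := x ^ 2 ^ m with hy
    have hyx : y ^ 2 ^ m = x := aux_frob2 m hm x
    have hx0 : x ≠ 0 := by rintro rfl; exact hx (by rw [hy, zero_pow (pow_ne_zero m two_ne_zero)])
    have hy0 : y ≠ 0 := fun h => hx0 (by rw [← hyx, h, zero_pow (pow_ne_zero m two_ne_zero)])
    have hx1 : x ≠ 1 := by rintro rfl; exact hx (one_pow _)
    have hy1 : y ≠ 1 := fun h => hx1 (by rw [← hyx, h, one_pow])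
    have hxy : x ≠ y := fun h => hx h.symm
    have hx1' : x + 1 ≠ 0 := aux_addne m hx1
    have hy1' : y + 1 ≠ 0 := aux_addne m hy1
    have hxy' : x + y ≠ 0 := aux_addne m hxy
    have hvne : x / y ≠ (x + 1) / (y + 1) := by
      intro h; rw [div_eq_div_iff hy0 hy1'] at h
      exact hxy (by linear_combination h)
    refine ⟨(x / y, (x + 1) / (y + 1)), ⟨?_, ?_, ?_, ?_, hvne⟩, ?_⟩
    · rw [pow_succ, div_pow, hyx, ← hy]
      field_simp
    · rw [pow_succ, div_pow, aux_frobadd, aux_frobadd, one_pow, hyx, ← hy]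
      field_simp
    · intro h; rw [div_eq_one_iff_eq hy0] at h; exact hxy h
    · intro h; rw [div_eq_one_iff_eq hy1'] at h
      exact hxy (by linear_combination h)
    · simp only
      have hd : x / y + (x + 1) / (y + 1) ≠ 0 := aux_addne m hvne
      field_simp
      ring_nf
      simp only [h2z, mul_zero, add_zero, zero_add, zero_mul]
      rw [← add_mul, mul_inv_cancel₀ hxy']
end

section
/- Let n and k be positive integers with gcd(k,n) = 1, and let F(x) = x^{2^{2k}+2^k+1} be the corresponding power function on F_{2^n}. If n is odd then DLU_F ≤ 2^{(n+1)/2}, and if n is even then DLU_F ≤ 2^{n/2+1}. -/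
open scoped BigOperators Classical

noncomputable instance (p n : ℕ) [Fact p.Prime] : Fintype (GaloisField p n) :=
  Fintype.ofFinite _

/-- The absolute trace map from `F_{2^n}` to `F_2`. -/
noncomputable def trF2 (n : ℕ) (x : GaloisField 2 n) : ZMod 2 :=
  Algebra.trace (ZMod 2) (GaloisField 2 n) x

/-- The binary Kloosterman sum `K_m(γ) = Σ_x (-1)^{Tr(γx + x⁻¹)}` (with `0⁻¹ = 0`). -/
noncomputable def kloo (m : ℕ) (γ : GaloisField 2 m) : ℤ :=
  ∑ x : GaloisField 2 m, (-1 : ℤ) ^ (trF2 m (γ * x + x⁻¹)).val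

/-- The DLCT entry of `F : F_{2^n} → F_{2^n}` at `(u,v)`. -/
noncomputable def dlct (n : ℕ) (F : GaloisField 2 n → GaloisField 2 n)
    (u v : GaloisField 2 n) : ℤ :=
  (Nat.card {x : GaloisField 2 n // trF2 n (v * (F (x + u) + F x)) = 0} : ℤ) - 2 ^ (n - 1)

/-- The differential-linear uniformity of `F`: the max of `|DLCT_F(u,v)|` over nonzero `u, v`. -/
noncomputable def dlu (n : ℕ) (F : GaloisField 2 n → GaloisField 2 n) : ℕ :=
  Finset.sup
    (Finset.univ.filter fun p : GaloisField 2 n × GaloisField 2 n => p.1 ≠ 0 ∧ p.2 ≠ 0)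
    (fun p => (dlct n F p.1 p.2).natAbs)


section
variable {n : ℕ}

lemma trF2_add (x y : GaloisField 2 n) : trF2 n (x + y) = trF2 n x + trF2 n y :=
  map_add (Algebra.trace (ZMod 2) (GaloisField 2 n)) x y

noncomputable def frobAlgEquiv : GaloisField 2 n ≃ₐ[ZMod 2] GaloisField 2 n :=
  AlgEquiv.ofBijective
    { toRingHom := frobenius (GaloisField 2 n) 2
      commutes' := fun r => by
        show frobenius _ 2 _ = _
        rw [frobenius_def, ← map_pow, ZMod.pow_card] }
    (Finite.injective_iff_bijective.mp (frobenius_inj (GaloisField 2 n) 2))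

lemma trF2_sq (x : GaloisField 2 n) : trF2 n (x ^ 2) = trF2 n x := by
  have := Algebra.trace_eq_of_algEquiv (frobAlgEquiv (n := n)) x
  simpa [frobAlgEquiv, frobenius_def, trF2] using this

lemma trF2_pow (m : ℕ) (x : GaloisField 2 n) : trF2 n (x ^ 2 ^ m) = trF2 n x := by
  induction m with
  | zero => simp
  | succ m ih => rw [pow_succ, pow_mul, trF2_sq, ih]

lemma gf_pow_card (hn : n ≠ 0) (x : GaloisField 2 n) : x ^ 2 ^ n = x := by
  have hcard : Fintype.card (GaloisField 2 n) = 2 ^ n := by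
    rw [← Nat.card_eq_fintype_card, GaloisField.card 2 n hn]
  calc x ^ 2 ^ n = x ^ Fintype.card (GaloisField 2 n) := by rw [hcard]
  _ = x := FiniteField.pow_card x

lemma gf_pow_card_mul (hn : n ≠ 0) (m : ℕ) (x : GaloisField 2 n) : x ^ 2 ^ (n * m) = x := by
  induction m with
  | zero => simp
  | succ m ih => rw [Nat.mul_succ, pow_add, pow_mul, ih, gf_pow_card hn]

lemma unshift (hn : n ≠ 0) (m : ℕ) (c : GaloisField 2 n) :
    (c ^ 2 ^ (m * (n - 1))) ^ 2 ^ m = c := by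
  rw [← pow_mul, ← pow_add]
  have h : m * (n - 1) + m = n * m := by
    obtain ⟨n', rfl⟩ : ∃ n', n = n' + 1 := ⟨n - 1, (Nat.succ_pred_eq_of_pos (Nat.pos_of_ne_zero hn)).symm⟩
    simp [Nat.add_sub_cancel]; ring
  rw [h, gf_pow_card_mul hn]

lemma tr_unshift (hn : n ≠ 0) (m : ℕ) (c x : GaloisField 2 n) :
    trF2 n (c * x ^ 2 ^ m) = trF2 n (c ^ 2 ^ (m * (n - 1)) * x) := by
  conv_rhs => rw [← trF2_pow m]
  rw [mul_pow, unshift hn]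

lemma half_shift (hn : n ≠ 0) {k : ℕ} (c : GaloisField 2 n) :
    (c ^ 2 ^ (k * (n - 1))) ^ 2 ^ (2 * k) = c ^ 2 ^ k := by
  rw [← pow_mul, ← pow_add]
  have h : k * (n - 1) + 2 * k = n * k + k := by
    obtain ⟨n', rfl⟩ : ∃ n', n = n' + 1 := ⟨n - 1, (Nat.succ_pred_eq_of_pos (Nat.pos_of_ne_zero hn)).symm⟩
    simp [Nat.add_sub_cancel]; ring
  rw [h, pow_add, pow_mul, gf_pow_card_mul hn]

lemma neg_one_pow_add (a b : ZMod 2) : (-1 : ℤ) ^ (a + b).val = (-1) ^ a.val * (-1) ^ b.val := by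
  revert a b; decide

lemma neg_one_pow_succ (a : ZMod 2) : (-1 : ℤ) ^ (a + 1).val = -((-1) ^ a.val) := by
  revert a; decide

lemma sum_char (hn : n ≠ 0) (c : GaloisField 2 n) :
    (∑ x : GaloisField 2 n, (-1 : ℤ) ^ (trF2 n (x * c)).val)
      = if c = 0 then (2 ^ n : ℤ) else 0 := by
  split_ifs with hc
  · subst hc
    simp only [mul_zero]
    have : trF2 n (0 : GaloisField 2 n) = 0 := map_zero (Algebra.trace (ZMod 2) (GaloisField 2 n))
    rw [this]
    simp only [ZMod.val_zero, pow_zero, Finset.sum_const, Finset.card_univ, nsmul_eq_mul, mul_one]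
    rw [show Fintype.card (GaloisField 2 n) = 2 ^ n by
      rw [← Nat.card_eq_fintype_card, GaloisField.card 2 n hn]]
    push_cast; ring
  · have hnd := traceForm_nondegenerate (ZMod 2) (GaloisField 2 n)
    have : ¬ ∀ x, trF2 n (c * x) = 0 := by
      intro h
      refine hc (hnd.1 c (fun y => ?_))
      rw [Algebra.traceForm_apply]
      exact h y
    push_neg at this
    obtain ⟨x₀, hx₀⟩ := this
    have hx₀' : trF2 n (x₀ * c) = 1 := by
      rw [mul_comm]
      revert hx₀; generalize trF2 n (c * x₀) = a; revert a; decide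
    set S := ∑ x : GaloisField 2 n, (-1 : ℤ) ^ (trF2 n (x * c)).val with hS
    have key : S = -S := by
      calc S = ∑ x : GaloisField 2 n, (-1 : ℤ) ^ (trF2 n ((x + x₀) * c)).val := by
              rw [hS]
              exact Fintype.sum_equiv (Equiv.addRight x₀) _ _ (fun x => rfl) |>.symm
        _ = ∑ x : GaloisField 2 n, -((-1 : ℤ) ^ (trF2 n (x * c)).val) := by
              apply Finset.sum_congr rfl
              intro x _
              rw [add_mul, trF2_add, hx₀', neg_one_pow_succ]
        _ = -S := by rw [hS, Finset.sum_neg_distrib]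
    omega


lemma frob_iter_inj (m : ℕ) : Function.Injective (fun z : GaloisField 2 n => z ^ 2 ^ m) := by
  induction m with
  | zero => intro a b h; simpa using h
  | succ m ih =>
    intro a b h
    have h2 : (a ^ 2 ^ m) ^ 2 = (b ^ 2 ^ m) ^ 2 := by
      rw [← pow_mul, ← pow_mul, ← pow_succ]
      exact h
    have h3 : frobenius (GaloisField 2 n) 2 (a ^ 2 ^ m)
        = frobenius (GaloisField 2 n) 2 (b ^ 2 ^ m) := by
      rw [frobenius_def, frobenius_def]; exact h2
    exact ih (frobenius_inj (GaloisField 2 n) 2 h3)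

lemma fix_frob (hn : n ≠ 0) {k : ℕ} (hgcd : Nat.gcd k n = 1) (x : GaloisField 2 n)
    (hx : x ^ 2 ^ k = x) : x = 0 ∨ x = 1 := by
  have mul_closed : ∀ a q : ℕ, x ^ 2 ^ a = x → x ^ 2 ^ (a * q) = x := by
    intro a q ha
    induction q with
    | zero => simp
    | succ q ih => rw [Nat.mul_succ, pow_add, pow_mul, ih, ha]
  have key : ∀ a b : ℕ, x ^ 2 ^ a = x → x ^ 2 ^ b = x → x ^ 2 ^ Nat.gcd a b = x := by
    intro a b
    induction a, b using Nat.gcd.induction with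
    | H0 b => intro _ hb; simpa using hb
    | H1 a b ha ih =>
      intro hxa hxb
      rw [Nat.gcd_rec]
      refine ih ?_ hxa
      have hdiv : b % a + a * (b / a) = b := Nat.mod_add_div b a
      have h1 : (x ^ 2 ^ (b % a)) ^ 2 ^ (a * (b / a)) = x := by
        rw [← pow_mul, ← pow_add, hdiv, hxb]
      have h2 : x ^ 2 ^ (a * (b / a)) = x := mul_closed a (b / a) hxa
      exact frob_iter_inj (a * (b / a)) (h1.trans h2.symm)
  have h1 : x ^ 2 ^ (1 : ℕ) = x := by
    rw [← hgcd]
    exact key k n hx (gf_pow_card hn x)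
  norm_num at h1
  have h2 : x * (x - 1) = 0 := by
    have : x * x = x := by rw [← pow_two]; exact h1
    linear_combination this
  rcases mul_eq_zero.mp h2 with h | h
  · exact Or.inl h
  · exact Or.inr (by linear_combination h)

lemma skew_bound (hn : n ≠ 0) {k : ℕ} (hgcd : Nat.gcd k n = 1) :
    ∀ (d : ℕ) (a : ℕ → GaloisField 2 n), a d ≠ 0 →
      (Finset.univ.filter (fun x : GaloisField 2 n =>
        ∑ i ∈ Finset.range (d + 1), a i * x ^ 2 ^ (k * i) = 0)).card ≤ 2 ^ d := by
  intro d
  induction d with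
  | zero =>
    intro a ha
    have hss : (Finset.univ.filter (fun x : GaloisField 2 n =>
        ∑ i ∈ Finset.range 1, a i * x ^ 2 ^ (k * i) = 0)) ⊆ {0} := by
      intro x hx
      simp only [Finset.mem_filter, Finset.sum_range_one, Nat.mul_zero, pow_zero, pow_one] at hx
      rcases mul_eq_zero.mp hx.2 with h | h
      · exact absurd h ha
      · simpa using h
    simpa using Finset.card_le_card hss
  | succ d ih =>
    intro a ha
    by_cases hK : ∀ x : GaloisField 2 n,
        (∑ i ∈ Finset.range (d + 2), a i * x ^ 2 ^ (k * i) = 0) → x = 0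
    · have hss : (Finset.univ.filter (fun x : GaloisField 2 n =>
          ∑ i ∈ Finset.range (d + 2), a i * x ^ 2 ^ (k * i) = 0)) ⊆ {0} := by
        intro x hx
        simp only [Finset.mem_filter] at hx
        simp [hK x hx.2]
      calc (Finset.univ.filter (fun x : GaloisField 2 n =>
          ∑ i ∈ Finset.range (d + 2), a i * x ^ 2 ^ (k * i) = 0)).card
          ≤ 1 := by simpa using Finset.card_le_card hss
        _ ≤ 2 ^ (d + 1) := Nat.one_le_two_pow
    · push_neg at hK
      obtain ⟨v, hvP, hv0⟩ := hK
      set a' : ℕ → GaloisField 2 n := fun i => a i * v ^ 2 ^ (k * i) with ha'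
      set b : ℕ → GaloisField 2 n := fun j => ∑ i ∈ Finset.Ioc j (d + 1), a' i with hb
      have hsum0 : ∑ i ∈ Finset.range (d + 2), a' i = 0 := hvP
      have hbtop : b d = a' (d + 1) := by
        show (∑ i ∈ Finset.Ioc d (d + 1), a' i) = a' (d + 1)
        rw [show Finset.Ioc d (d + 1) = {d + 1} from by
          ext j; simp only [Finset.mem_Ioc, Finset.mem_singleton]; omega]
        simp
      have hbne : b d ≠ 0 := by
        rw [hbtop]
        exact mul_ne_zero ha (pow_ne_zero _ hv0)
      have key : ∀ y : GaloisField 2 n,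
          ∑ i ∈ Finset.range (d + 2), a' i * y ^ 2 ^ (k * i)
            = ∑ j ∈ Finset.range (d + 1), b j * ((y ^ 2 ^ k - y) ^ 2 ^ (k * j)) := by
        intro y
        have hsub : ∀ j : ℕ, (y ^ 2 ^ k - y) ^ 2 ^ (k * j)
            = y ^ 2 ^ (k * (j + 1)) - y ^ 2 ^ (k * j) := by
          intro j
          rw [sub_pow_char_pow]
          congr 1
          rw [← pow_mul, ← pow_add]
          congr 1
          ring
        calc ∑ i ∈ Finset.range (d + 2), a' i * y ^ 2 ^ (k * i)
            = ∑ i ∈ Finset.range (d + 2), a' i * (y ^ 2 ^ (k * i) - y)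
              + (∑ i ∈ Finset.range (d + 2), a' i) * y := by
              rw [Finset.sum_mul, ← Finset.sum_add_distrib]
              apply Finset.sum_congr rfl; intro i _; ring
          _ = ∑ i ∈ Finset.range (d + 2), a' i * (y ^ 2 ^ (k * i) - y) := by
              rw [hsum0]; ring
          _ = ∑ i ∈ Finset.range (d + 2), a' i *
                (∑ j ∈ Finset.range i, (y ^ 2 ^ (k * (j + 1)) - y ^ 2 ^ (k * j))) := by
              apply Finset.sum_congr rfl; intro i _
              congr 1
              rw [Finset.sum_range_sub (fun j => y ^ 2 ^ (k * j))]
              simp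
          _ = ∑ i ∈ Finset.range (d + 2), ∑ j ∈ Finset.range (d + 1),
                (if j < i then a' i * (y ^ 2 ^ (k * (j + 1)) - y ^ 2 ^ (k * j)) else 0) := by
              apply Finset.sum_congr rfl; intro i hi
              rw [Finset.mul_sum]
              rw [show Finset.range i
                  = (Finset.range (d + 1)).filter (fun j => j < i) from by
                ext j
                simp only [Finset.mem_filter, Finset.mem_range] at *
                omega]
              rw [Finset.sum_filter]
          _ = ∑ j ∈ Finset.range (d + 1), ∑ i ∈ Finset.range (d + 2),
                (if j < i then a' i * (y ^ 2 ^ (k * (j + 1)) - y ^ 2 ^ (k * j)) else 0) :=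
              Finset.sum_comm
          _ = ∑ j ∈ Finset.range (d + 1), b j * ((y ^ 2 ^ k - y) ^ 2 ^ (k * j)) := by
              apply Finset.sum_congr rfl; intro j hj
              rw [hsub j]
              show _ = (∑ i ∈ Finset.Ioc j (d + 1), a' i) * (y ^ 2 ^ (k * (j + 1)) - y ^ 2 ^ (k * j))
              rw [show Finset.Ioc j (d + 1)
                  = (Finset.range (d + 2)).filter (fun i => j < i) from by
                ext i; simp only [Finset.mem_filter, Finset.mem_range, Finset.mem_Ioc]; omega]
              rw [Finset.sum_filter, Finset.sum_mul]
              apply Finset.sum_congr rfl; intro i _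
              split_ifs with h
              · ring
              · ring
      have hcards : (Finset.univ.filter (fun y : GaloisField 2 n =>
            ∑ i ∈ Finset.range (d + 2), a' i * y ^ 2 ^ (k * i) = 0)).card
          = (Finset.univ.filter (fun x : GaloisField 2 n =>
            ∑ i ∈ Finset.range (d + 2), a i * x ^ 2 ^ (k * i) = 0)).card := by
        apply Finset.card_bij (fun y _ => v * y)
        · intro y hy
          simp only [Finset.mem_filter, Finset.mem_univ, true_and] at hy ⊢
          rw [← hy]
          apply Finset.sum_congr rfl; intro i _
          rw [mul_pow]
          show a i * (v ^ 2 ^ (k * i) * y ^ 2 ^ (k * i)) = a i * v ^ 2 ^ (k * i) * y ^ 2 ^ (k * i)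
          ring
        · intro y₁ _ y₂ _ h
          exact mul_left_cancel₀ hv0 h
        · intro x hx
          simp only [Finset.mem_filter, Finset.mem_univ, true_and] at hx
          refine ⟨v⁻¹ * x, ?_, by field_simp⟩
          simp only [Finset.mem_filter, Finset.mem_univ, true_and]
          rw [← hx]
          apply Finset.sum_congr rfl; intro i _
          show a i * v ^ 2 ^ (k * i) * (v⁻¹ * x) ^ 2 ^ (k * i) = a i * x ^ 2 ^ (k * i)
          rw [mul_pow, inv_pow]
          have hvp : v ^ 2 ^ (k * i) ≠ 0 := pow_ne_zero _ hv0
          field_simp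
      have hQ := ih b hbne
      have hmaps : ∀ y ∈ Finset.univ.filter (fun y : GaloisField 2 n =>
            ∑ i ∈ Finset.range (d + 2), a' i * y ^ 2 ^ (k * i) = 0),
          (y ^ 2 ^ k - y) ∈ Finset.univ.filter (fun z : GaloisField 2 n =>
            ∑ j ∈ Finset.range (d + 1), b j * z ^ 2 ^ (k * j) = 0) := by
        intro y hy
        simp only [Finset.mem_filter, Finset.mem_univ, true_and] at hy ⊢
        rw [← key y]
        exact hy
      have hfib : ∀ z ∈ Finset.univ.filter (fun z : GaloisField 2 n =>
            ∑ j ∈ Finset.range (d + 1), b j * z ^ 2 ^ (k * j) = 0),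
          ((Finset.univ.filter (fun y : GaloisField 2 n =>
            ∑ i ∈ Finset.range (d + 2), a' i * y ^ 2 ^ (k * i) = 0)).filter
              (fun y => y ^ 2 ^ k - y = z)).card ≤ 2 := by
        intro z _
        rcases Finset.eq_empty_or_nonempty ((Finset.univ.filter (fun y : GaloisField 2 n =>
            ∑ i ∈ Finset.range (d + 2), a' i * y ^ 2 ^ (k * i) = 0)).filter
              (fun y => y ^ 2 ^ k - y = z)) with h | ⟨y₀, hy₀⟩
        · simp [h]
        · have hsub2 : ((Finset.univ.filter (fun y : GaloisField 2 n =>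
              ∑ i ∈ Finset.range (d + 2), a' i * y ^ 2 ^ (k * i) = 0)).filter
                (fun y => y ^ 2 ^ k - y = z)) ⊆ {y₀, y₀ + 1} := by
            intro y hy
            have h1 : y ^ 2 ^ k - y = z := (Finset.mem_filter.mp hy).2
            have h2 : y₀ ^ 2 ^ k - y₀ = z := (Finset.mem_filter.mp hy₀).2
            have hd : (y - y₀) ^ 2 ^ k = y - y₀ := by
              rw [sub_pow_char_pow]
              linear_combination h1 - h2
            rcases fix_frob hn hgcd _ hd with h | h
            · simp only [Finset.mem_insert, Finset.mem_singleton]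
              left; linear_combination h
            · simp only [Finset.mem_insert, Finset.mem_singleton]
              right; linear_combination h
          calc ((Finset.univ.filter (fun y : GaloisField 2 n =>
              ∑ i ∈ Finset.range (d + 2), a' i * y ^ 2 ^ (k * i) = 0)).filter
                (fun y => y ^ 2 ^ k - y = z)).card
              ≤ ({y₀, y₀ + 1} : Finset (GaloisField 2 n)).card := Finset.card_le_card hsub2
            _ ≤ 2 := (Finset.card_insert_le _ _).trans (by simp)
      have hmain := Finset.card_le_mul_card_image_of_maps_to hmaps 2 hfib
      rw [← hcards]
      calc (Finset.univ.filter (fun y : GaloisField 2 n =>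
            ∑ i ∈ Finset.range (d + 2), a' i * y ^ 2 ^ (k * i) = 0)).card
          ≤ 2 * (Finset.univ.filter (fun z : GaloisField 2 n =>
            ∑ j ∈ Finset.range (d + 1), b j * z ^ 2 ^ (k * j) = 0)).card := hmain
        _ ≤ 2 * 2 ^ d := by omega
        _ = 2 ^ (d + 1) := by ring


lemma odd_nt : ∀ m : ℕ, Odd m → ∀ s E : ℤ, 0 ≤ E → E ≤ 16 → 4 * s ^ 2 = 2 ^ m * E →
    s.natAbs ≤ 2 ^ ((m + 1) / 2) := by
  intro m
  induction m using Nat.strong_induction_on with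
  | _ m ih =>
    intro hm s E hE0 hE16 heq
    have hm' : m % 2 = 1 := Nat.odd_iff.mp hm
    rcases Nat.lt_or_ge m 3 with hm3 | hm3
    · have hm1 : m = 1 := by omega
      subst hm1
      have hs8 : s ^ 2 ≤ 8 := by nlinarith
      by_contra hcon
      push_neg at hcon
      have h3 : 3 ≤ s.natAbs := by simp at hcon; omega
      have h3' : (3 : ℤ) ≤ (s.natAbs : ℤ) := by exact_mod_cast h3
      have habs : ((s.natAbs : ℤ)) * ((s.natAbs : ℤ)) = s * s := Int.natAbs_mul_self' s
      nlinarith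
    · have hsev : Even s := by
        rcases Int.even_or_odd s with h | h
        · exact h
        · exfalso
          have h8 : (8 : ℤ) ∣ 4 * s ^ 2 := by
            rw [heq]
            refine Dvd.dvd.mul_right ?_ E
            have h23 : (2 : ℤ) ^ 3 ∣ 2 ^ m := pow_dvd_pow 2 hm3
            simpa using h23
          obtain ⟨c, hc⟩ := h8
          obtain ⟨t, ht⟩ := h
          have hx : 4 * s ^ 2 = 16 * t ^ 2 + 16 * t + 4 := by rw [ht]; ring
          rw [hx] at hc
          set T := t ^ 2
          omega
      obtain ⟨t, ht⟩ := hsev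
      have hm2 : (2 : ℤ) ^ m = 2 ^ (m - 2) * 4 := by
        conv_lhs => rw [show m = m - 2 + 2 from by omega]
        rw [pow_add]; norm_num
      have hsq : (t + t) ^ 2 = 4 * t ^ 2 := by ring
      have h16 : 16 * t ^ 2 = 4 * (2 ^ (m - 2) * E) := by
        have h0 := heq
        rw [ht, hsq, hm2] at h0
        linarith
      have heq' : 4 * t ^ 2 = 2 ^ (m - 2) * E := by linarith
      have hmodd : Odd (m - 2) := by rw [Nat.odd_iff]; omega
      have hrec := ih (m - 2) (by omega) hmodd t E hE0 hE16 heq'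
      have hnat : s.natAbs = 2 * t.natAbs := by
        rw [ht, show t + t = 2 * t from by ring, Int.natAbs_mul]
        simp
      calc s.natAbs = 2 * t.natAbs := hnat
        _ ≤ 2 * 2 ^ ((m - 2 + 1) / 2) := by omega
        _ = 2 ^ ((m - 2 + 1) / 2 + 1) := by rw [pow_succ]; ring
        _ = 2 ^ ((m + 1) / 2) := by congr 1; omega

lemma sq_le_bound (s : ℤ) (m : ℕ) (h : s ^ 2 ≤ (2 ^ m : ℤ) ^ 2) : s.natAbs ≤ 2 ^ m := by
  by_contra hcon
  push_neg at hcon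
  have h1 : (2 ^ m + 1 : ℤ) ≤ (s.natAbs : ℤ) := by exact_mod_cast hcon
  have habs : ((s.natAbs : ℤ)) * ((s.natAbs : ℤ)) = s * s := Int.natAbs_mul_self' s
  have hp : (0 : ℤ) ≤ 2 ^ m := by positivity
  nlinarith


lemma hpp (z : GaloisField 2 n) (i j : ℕ) : (z ^ 2 ^ i) ^ 2 ^ j = z ^ 2 ^ (i + j) := by
  rw [← pow_mul, ← pow_add]

lemma main_identity (hn : n ≠ 0) {k : ℕ} (hgcd : Nat.gcd k n = 1)
    (u v : GaloisField 2 n) (hu : u ≠ 0) (hv : v ≠ 0) :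
    ∃ E : ℤ, 0 ≤ E ∧ E ≤ 16 ∧
      4 * (dlct n (fun x => x ^ (2 ^ (2 * k) + 2 ^ k + 1)) u v) ^ 2 = 2 ^ n * E := by
  classical
  set e : ℕ := 2 ^ (2 * k) + 2 ^ k + 1 with he
  set f : GaloisField 2 n → ZMod 2 :=
    fun x => trF2 n (v * ((x + u) ^ e + x ^ e)) with hf
  set N : ℕ := (Finset.univ.filter (fun x : GaloisField 2 n => f x = 0)).card with hN
  set S : ℤ := ∑ x : GaloisField 2 n, (-1 : ℤ) ^ (f x).val with hS
  have hcard : Fintype.card (GaloisField 2 n) = 2 ^ n := by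
    rw [← Nat.card_eq_fintype_card, GaloisField.card 2 n hn]
  -- dlct = N - 2^(n-1)
  have hdl : dlct n (fun x => x ^ e) u v = (N : ℤ) - 2 ^ (n - 1) := by
    rw [dlct, hN]
    congr 1
    rw [Nat.card_eq_fintype_card, Fintype.card_subtype]
  -- S = 2N - 2^n
  have hSN : S = 2 * (N : ℤ) - 2 ^ n := by
    have hpt : ∀ t : ZMod 2, (-1 : ℤ) ^ t.val = if t = 0 then 1 else -1 := by decide
    rw [hS]
    calc ∑ x : GaloisField 2 n, (-1 : ℤ) ^ (f x).val
        = ∑ x : GaloisField 2 n, (if f x = 0 then (1 : ℤ) else -1) := by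
          apply Finset.sum_congr rfl; intro x _; exact hpt (f x)
      _ = 2 * (N : ℤ) - 2 ^ n := by
          rw [Finset.sum_ite, Finset.sum_const, Finset.sum_const]
          have hsplit := Finset.card_filter_add_card_filter_not
            (s := (Finset.univ : Finset (GaloisField 2 n))) (p := fun x => f x = 0)
          rw [Finset.card_univ, hcard] at hsplit
          rw [← hN]
          have : (Finset.univ.filter (fun x : GaloisField 2 n => ¬ f x = 0)).card
              = 2 ^ n - N := by omega
          rw [this]
          have hle : N ≤ 2 ^ n := by omega
          simp only [nsmul_eq_mul]
          rw [Nat.cast_sub hle]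
          push_cast
          ring
  have h2d : 2 * dlct n (fun x => x ^ e) u v = S := by
    rw [hdl, hSN]
    have : (2 : ℤ) * 2 ^ (n - 1) = 2 ^ n := by
      rw [← pow_succ']
      congr 1
      omega
    linarith
  -- characteristic two facts
  have h2L : (2 : GaloisField 2 n) = 0 := by
    have := CharP.cast_eq_zero (GaloisField 2 n) 2
    exact_mod_cast this
  have h2Z : (2 : ZMod 2) = 0 := by decide
  -- the cube expansion
  have hcube : ∀ z : GaloisField 2 n, z ^ e = z ^ 2 ^ (2 * k) * z ^ 2 ^ k * z := by
    intro z
    rw [he, pow_add, pow_add, pow_one]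
  have hfro2 : ∀ a b : GaloisField 2 n, (a + b) ^ 2 ^ (2 * k) = a ^ 2 ^ (2 * k) + b ^ 2 ^ (2 * k) :=
    fun a b => add_pow_char_pow a b 2 (2 * k)
  have hfro1 : ∀ a b : GaloisField 2 n, (a + b) ^ 2 ^ k = a ^ 2 ^ k + b ^ 2 ^ k :=
    fun a b => add_pow_char_pow a b 2 k
  -- main multilinear identity
  have hM : ∀ x w : GaloisField 2 n,
      (x + w + u) ^ e + (x + w) ^ e + ((x + u) ^ e + x ^ e) + ((w + u) ^ e + w ^ e) + u ^ e
        = x ^ 2 ^ (2 * k) * w ^ 2 ^ k * u + w ^ 2 ^ (2 * k) * x ^ 2 ^ k * u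
          + x ^ 2 ^ (2 * k) * u ^ 2 ^ k * w + w ^ 2 ^ (2 * k) * u ^ 2 ^ k * x
          + u ^ 2 ^ (2 * k) * x ^ 2 ^ k * w + u ^ 2 ^ (2 * k) * w ^ 2 ^ k * x := by
    intro x w
    simp only [hcube, hfro2, hfro1]
    linear_combination ((x ^ 2 ^ (2*k) + w ^ 2 ^ (2*k)) * (x ^ 2 ^ k + w ^ 2 ^ k) * (x + w)
      + (x ^ 2 ^ (2*k) + u ^ 2 ^ (2*k)) * (x ^ 2 ^ k + u ^ 2 ^ k) * (x + u)
      + (w ^ 2 ^ (2*k) + u ^ 2 ^ (2*k)) * (w ^ 2 ^ k + u ^ 2 ^ k) * (w + u)) * h2L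
  -- the linear map whose kernel is the radical
  set Lm : GaloisField 2 n → GaloisField 2 n := fun w =>
    (v * u * w ^ 2 ^ k) ^ 2 ^ (2 * k * (n - 1))
    + (v * u * w ^ 2 ^ (2 * k)) ^ 2 ^ (k * (n - 1))
    + (v * u ^ 2 ^ k * w) ^ 2 ^ (2 * k * (n - 1))
    + v * u ^ 2 ^ k * w ^ 2 ^ (2 * k)
    + (v * u ^ 2 ^ (2 * k) * w) ^ 2 ^ (k * (n - 1))
    + v * u ^ 2 ^ (2 * k) * w ^ 2 ^ k with hLm
  -- the bilinear identity
  have hTr : ∀ x w : GaloisField 2 n,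
      f (x + w) + f x + (f w + f 0) = trF2 n (x * Lm w) := by
    intro x w
    have h0e : (0 : GaloisField 2 n) ^ e = 0 := zero_pow (by positivity)
    have hfx : f (x + w) + f x + (f w + f 0)
        = trF2 n (v * ((x + w + u) ^ e + (x + w) ^ e + ((x + u) ^ e + x ^ e)
            + ((w + u) ^ e + w ^ e) + u ^ e)) := by
      rw [hf]
      simp only []
      rw [← trF2_add, ← trF2_add, ← trF2_add]
      congr 1
      rw [zero_add, h0e, add_zero]
      ring
    rw [hfx, hM x w]
    have hT1 : trF2 n (v * (x ^ 2 ^ (2 * k) * w ^ 2 ^ k * u))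
        = trF2 n (x * ((v * u * w ^ 2 ^ k) ^ 2 ^ (2 * k * (n - 1)))) := by
      rw [show v * (x ^ 2 ^ (2 * k) * w ^ 2 ^ k * u)
          = (v * u * w ^ 2 ^ k) * x ^ 2 ^ (2 * k) from by ring]
      rw [tr_unshift hn (2 * k)]
      congr 1
      ring
    have hT2 : trF2 n (v * (w ^ 2 ^ (2 * k) * x ^ 2 ^ k * u))
        = trF2 n (x * ((v * u * w ^ 2 ^ (2 * k)) ^ 2 ^ (k * (n - 1)))) := by
      rw [show v * (w ^ 2 ^ (2 * k) * x ^ 2 ^ k * u)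
          = (v * u * w ^ 2 ^ (2 * k)) * x ^ 2 ^ k from by ring]
      rw [tr_unshift hn k]
      congr 1
      ring
    have hT3 : trF2 n (v * (x ^ 2 ^ (2 * k) * u ^ 2 ^ k * w))
        = trF2 n (x * ((v * u ^ 2 ^ k * w) ^ 2 ^ (2 * k * (n - 1)))) := by
      rw [show v * (x ^ 2 ^ (2 * k) * u ^ 2 ^ k * w)
          = (v * u ^ 2 ^ k * w) * x ^ 2 ^ (2 * k) from by ring]
      rw [tr_unshift hn (2 * k)]
      congr 1
      ring
    have hT4 : trF2 n (v * (w ^ 2 ^ (2 * k) * u ^ 2 ^ k * x))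
        = trF2 n (x * (v * u ^ 2 ^ k * w ^ 2 ^ (2 * k))) := by
      congr 1
      ring
    have hT5 : trF2 n (v * (u ^ 2 ^ (2 * k) * x ^ 2 ^ k * w))
        = trF2 n (x * ((v * u ^ 2 ^ (2 * k) * w) ^ 2 ^ (k * (n - 1)))) := by
      rw [show v * (u ^ 2 ^ (2 * k) * x ^ 2 ^ k * w)
          = (v * u ^ 2 ^ (2 * k) * w) * x ^ 2 ^ k from by ring]
      rw [tr_unshift hn k]
      congr 1
      ring
    have hT6 : trF2 n (v * (u ^ 2 ^ (2 * k) * w ^ 2 ^ k * x))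
        = trF2 n (x * (v * u ^ 2 ^ (2 * k) * w ^ 2 ^ k)) := by
      congr 1
      ring
    calc trF2 n (v * (x ^ 2 ^ (2 * k) * w ^ 2 ^ k * u + w ^ 2 ^ (2 * k) * x ^ 2 ^ k * u
            + x ^ 2 ^ (2 * k) * u ^ 2 ^ k * w + w ^ 2 ^ (2 * k) * u ^ 2 ^ k * x
            + u ^ 2 ^ (2 * k) * x ^ 2 ^ k * w + u ^ 2 ^ (2 * k) * w ^ 2 ^ k * x))
        = trF2 n (v * (x ^ 2 ^ (2 * k) * w ^ 2 ^ k * u))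
          + trF2 n (v * (w ^ 2 ^ (2 * k) * x ^ 2 ^ k * u))
          + trF2 n (v * (x ^ 2 ^ (2 * k) * u ^ 2 ^ k * w))
          + trF2 n (v * (w ^ 2 ^ (2 * k) * u ^ 2 ^ k * x))
          + trF2 n (v * (u ^ 2 ^ (2 * k) * x ^ 2 ^ k * w))
          + trF2 n (v * (u ^ 2 ^ (2 * k) * w ^ 2 ^ k * x)) := by
          rw [← trF2_add, ← trF2_add, ← trF2_add, ← trF2_add, ← trF2_add]
          congr 1
          ring
      _ = trF2 n (x * Lm w) := by
          rw [hT1, hT2, hT3, hT4, hT5, hT6]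
          rw [← trF2_add, ← trF2_add, ← trF2_add, ← trF2_add, ← trF2_add]
          congr 1
          rw [hLm]
          ring
  -- coefficients of the linearized polynomial
  set aa : ℕ → GaloisField 2 n := fun i =>
    if i = 0 then v * u ^ 2 ^ k
    else if i = 1 then v * u + v ^ 2 ^ k * u ^ 2 ^ (3 * k)
    else if i = 3 then v ^ 2 ^ k * u ^ 2 ^ k + v ^ 2 ^ (2 * k) * u ^ 2 ^ (4 * k)
    else if i = 4 then v ^ 2 ^ (2 * k) * u ^ 2 ^ (3 * k)
    else 0 with haa
  have ha4 : aa 4 ≠ 0 := by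
    rw [haa]
    norm_num
    exact ⟨hv, hu⟩
  have e1 : ∀ z : GaloisField 2 n, (z ^ 2 ^ k) ^ 2 ^ (2 * k) = z ^ 2 ^ (3 * k) := by
    intro z; rw [hpp, show k + 2 * k = 3 * k from by ring]
  have e2 : ∀ z : GaloisField 2 n, (z ^ 2 ^ (2 * k)) ^ 2 ^ (2 * k) = z ^ 2 ^ (4 * k) := by
    intro z; rw [hpp, show 2 * k + 2 * k = 4 * k from by ring]
  have e3 : ∀ z : GaloisField 2 n, (z ^ 2 ^ (2 * k)) ^ 2 ^ k = z ^ 2 ^ (3 * k) := by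
    intro z; rw [hpp, show 2 * k + k = 3 * k from by ring]
  have hLp : ∀ w : GaloisField 2 n,
      (Lm w) ^ 2 ^ (2 * k) = ∑ i ∈ Finset.range (4 + 1), aa i * w ^ 2 ^ (k * i) := by
    intro w
    have t1 : ((v * u * w ^ 2 ^ k) ^ 2 ^ (2 * k * (n - 1))) ^ 2 ^ (2 * k)
        = v * u * w ^ 2 ^ k := unshift hn (2 * k) _
    have t2 : ((v * u * w ^ 2 ^ (2 * k)) ^ 2 ^ (k * (n - 1))) ^ 2 ^ (2 * k)
        = v ^ 2 ^ k * u ^ 2 ^ k * w ^ 2 ^ (3 * k) := by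
      rw [half_shift hn, mul_pow, mul_pow, e3 w]
    have t3 : ((v * u ^ 2 ^ k * w) ^ 2 ^ (2 * k * (n - 1))) ^ 2 ^ (2 * k)
        = v * u ^ 2 ^ k * w := unshift hn (2 * k) _
    have t4 : (v * u ^ 2 ^ k * w ^ 2 ^ (2 * k)) ^ 2 ^ (2 * k)
        = v ^ 2 ^ (2 * k) * u ^ 2 ^ (3 * k) * w ^ 2 ^ (4 * k) := by
      rw [mul_pow, mul_pow, e1 u, e2 w]
    have t5 : ((v * u ^ 2 ^ (2 * k) * w) ^ 2 ^ (k * (n - 1))) ^ 2 ^ (2 * k)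
        = v ^ 2 ^ k * u ^ 2 ^ (3 * k) * w ^ 2 ^ k := by
      rw [half_shift hn, mul_pow, mul_pow, e3 u]
    have t6 : (v * u ^ 2 ^ (2 * k) * w ^ 2 ^ k) ^ 2 ^ (2 * k)
        = v ^ 2 ^ (2 * k) * u ^ 2 ^ (4 * k) * w ^ 2 ^ (3 * k) := by
      rw [mul_pow, mul_pow, e2 u, e1 w]
    rw [hLm]
    simp only [hfro2]
    rw [t1, t2, t3, t4, t5, t6]
    rw [Finset.sum_range_succ, Finset.sum_range_succ, Finset.sum_range_succ,
      Finset.sum_range_succ, Finset.sum_range_one]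
    rw [haa]
    norm_num
    ring
  -- kernel bound
  have hker : (Finset.univ.filter (fun w : GaloisField 2 n => Lm w = 0)).card ≤ 16 := by
    have hsub : (Finset.univ.filter (fun w : GaloisField 2 n => Lm w = 0))
        ⊆ (Finset.univ.filter (fun w : GaloisField 2 n =>
          ∑ i ∈ Finset.range (4 + 1), aa i * w ^ 2 ^ (k * i) = 0)) := by
      intro w hw
      simp only [Finset.mem_filter, Finset.mem_univ, true_and] at hw ⊢
      rw [← hLp w, hw]
      exact zero_pow (by positivity)
    calc (Finset.univ.filter (fun w : GaloisField 2 n => Lm w = 0)).card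
        ≤ (Finset.univ.filter (fun w : GaloisField 2 n =>
          ∑ i ∈ Finset.range (4 + 1), aa i * w ^ 2 ^ (k * i) = 0)).card :=
          Finset.card_le_card hsub
      _ ≤ 2 ^ 4 := skew_bound hn hgcd 4 aa ha4
      _ = 16 := by norm_num
  -- the second difference at the character level
  have hg2 : ∀ x w : GaloisField 2 n,
      f x + f (x + w) = trF2 n (x * Lm w) + (f w + f 0) := by
    intro x w
    have h := hTr x w
    linear_combination h - (f w + f 0) * h2Z
  -- square of the character sum
  set E0 : ℤ := ∑ w ∈ Finset.univ.filter (fun w : GaloisField 2 n => Lm w = 0),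
    (-1 : ℤ) ^ (f w + f 0).val with hE0
  have hSsq : S * S = 2 ^ n * E0 := by
    calc S * S
        = ∑ x : GaloisField 2 n, ∑ y : GaloisField 2 n,
            (-1 : ℤ) ^ (f x).val * (-1 : ℤ) ^ (f y).val := by
          rw [hS, Finset.sum_mul_sum]
      _ = ∑ x : GaloisField 2 n, ∑ w : GaloisField 2 n,
            (-1 : ℤ) ^ (f x).val * (-1 : ℤ) ^ (f (x + w)).val := by
          apply Finset.sum_congr rfl; intro x _
          exact (Fintype.sum_equiv (Equiv.addLeft x)
            (fun w => (-1 : ℤ) ^ (f x).val * (-1 : ℤ) ^ (f (x + w)).val)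
            (fun y => (-1 : ℤ) ^ (f x).val * (-1 : ℤ) ^ (f y).val)
            (fun w => rfl)).symm
      _ = ∑ x : GaloisField 2 n, ∑ w : GaloisField 2 n,
            (-1 : ℤ) ^ (trF2 n (x * Lm w)).val * (-1 : ℤ) ^ (f w + f 0).val := by
          apply Finset.sum_congr rfl; intro x _
          apply Finset.sum_congr rfl; intro w _
          rw [← neg_one_pow_add, ← neg_one_pow_add, hg2 x w]
      _ = ∑ w : GaloisField 2 n, ∑ x : GaloisField 2 n,
            (-1 : ℤ) ^ (trF2 n (x * Lm w)).val * (-1 : ℤ) ^ (f w + f 0).val :=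
          Finset.sum_comm
      _ = ∑ w : GaloisField 2 n,
            (if Lm w = 0 then (2 ^ n : ℤ) else 0) * (-1 : ℤ) ^ (f w + f 0).val := by
          apply Finset.sum_congr rfl; intro w _
          rw [← Finset.sum_mul, sum_char hn (Lm w)]
      _ = ∑ w ∈ Finset.univ.filter (fun w : GaloisField 2 n => Lm w = 0),
            (2 ^ n : ℤ) * (-1 : ℤ) ^ (f w + f 0).val := by
          rw [Finset.sum_filter]
          apply Finset.sum_congr rfl; intro w _
          split_ifs
          · rfl
          · ring
      _ = 2 ^ n * E0 := by rw [hE0, Finset.mul_sum]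
  have hE0le : E0 ≤ 16 := by
    have habs : |E0| ≤ ((Finset.univ.filter (fun w : GaloisField 2 n => Lm w = 0)).card : ℤ) := by
      rw [hE0]
      calc |∑ w ∈ Finset.univ.filter (fun w : GaloisField 2 n => Lm w = 0),
            (-1 : ℤ) ^ (f w + f 0).val|
          ≤ ∑ w ∈ Finset.univ.filter (fun w : GaloisField 2 n => Lm w = 0),
            |(-1 : ℤ) ^ (f w + f 0).val| := Finset.abs_sum_le_sum_abs _ _
        _ = ∑ w ∈ Finset.univ.filter (fun w : GaloisField 2 n => Lm w = 0), 1 := by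
            apply Finset.sum_congr rfl; intro w _
            rw [abs_pow, abs_neg, abs_one, one_pow]
        _ = ((Finset.univ.filter (fun w : GaloisField 2 n => Lm w = 0)).card : ℤ) := by
            simp
    have : ((Finset.univ.filter (fun w : GaloisField 2 n => Lm w = 0)).card : ℤ) ≤ 16 := by
      exact_mod_cast hker
    calc E0 ≤ |E0| := le_abs_self E0
      _ ≤ _ := habs
      _ ≤ 16 := this
  have hE0nonneg : 0 ≤ E0 := by
    by_contra hcon
    push_neg at hcon
    have h1 : (0 : ℤ) < 2 ^ n := by positivity
    have h2 : 2 ^ n * E0 < 0 := mul_neg_of_pos_of_neg h1 hcon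
    have h3 : 0 ≤ S * S := mul_self_nonneg S
    omega
  refine ⟨E0, hE0nonneg, hE0le, ?_⟩
  linear_combination hSsq + (2 * dlct n (fun x => x ^ e) u v + S) * h2d

end

/-- Corollary: for `F(x) = x^{2^{2k}+2^k+1}` on `F_{2^n}` with `gcd(k,n) = 1`,
`DLU_F ≤ 2^{(n+1)/2}` if `n` is odd and `DLU_F ≤ 2^{n/2+1}` if `n` is even. -/
theorem stmt2 (n k : ℕ) (hn : 0 < n) (hk : 0 < k) (he : Nat.gcd k n = 1) :
    (Odd n →
      dlu n (fun x : GaloisField 2 n => x ^ (2 ^ (2 * k) + 2 ^ k + 1)) ≤ 2 ^ ((n + 1) / 2)) ∧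
    (Even n →
      dlu n (fun x : GaloisField 2 n => x ^ (2 ^ (2 * k) + 2 ^ k + 1)) ≤ 2 ^ (n / 2 + 1)) := by
  constructor
  · intro hodd
    apply Finset.sup_le
    intro p hp
    simp only [Finset.mem_filter, Finset.mem_univ, true_and] at hp
    obtain ⟨E, hE0, hE16, heq⟩ := main_identity hn.ne' he p.1 p.2 hp.1 hp.2
    exact odd_nt n hodd _ E hE0 hE16 heq
  · intro heven
    apply Finset.sup_le
    intro p hp
    simp only [Finset.mem_filter, Finset.mem_univ, true_and] at hp
    obtain ⟨E, hE0, hE16, heq⟩ := main_identity hn.ne' he p.1 p.2 hp.1 hp.2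
    apply sq_le_bound
    have hpow : ((2 : ℤ) ^ (n / 2 + 1)) ^ 2 = 2 ^ (n + 2) := by
      rw [← pow_mul]
      congr 1
      have := Nat.even_iff.mp heven
      omega
    rw [hpow]
    have hpn : (0 : ℤ) ≤ 2 ^ n := by positivity
    have h1 : (2 : ℤ) ^ n * E ≤ 2 ^ n * 16 := by nlinarith
    have h2 : (2 : ℤ) ^ n * 16 = 4 * 2 ^ (n + 2) := by rw [pow_add]; ring
    nlinarith
end

section
/- Let n and k be positive integers with gcd(k,n) = e, and let v be a nonzero element of F_{2^n}. Consider the F_2-linear map L : F_{2^n} → F_{2^n} defined by L(z) = v^{2^{2k}} z^{2^{4k}} + (v^{2^{2k}} + v^{2^k}) z^{2^{3k}} + (v^{2^k} + v) z^{2^k} + v z (all exponents of 2 taken modulo n). Then the kernel of L has size at most 2^{3e} if n is odd, and at most 2^{4e} if n is even. -/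
open Polynomial

section Aux

variable {F : Type*} [Field F] [Finite F]

/-- fixed points of `z ↦ z ^ 2 ^ m` number at most `2 ^ m`. -/
lemma aux_fixed_card (m : ℕ) (hm : 0 < m) :
    Nat.card {z : F // z ^ 2 ^ m = z} ≤ 2 ^ m := by
  classical
  have h1 : (1:ℕ) < 2 ^ m := Nat.one_lt_pow hm.ne' one_lt_two
  set p : F[X] := X ^ 2 ^ m - X with hp
  have hp0 : p ≠ 0 := FiniteField.X_pow_card_sub_X_ne_zero F h1
  have hsub : {z : F | z ^ 2 ^ m = z} ⊆ ↑p.roots.toFinset := by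
    intro z hz
    simp only [Finset.coe_sort_coe, Multiset.mem_toFinset, Finset.mem_coe]
    rw [Polynomial.mem_roots hp0]
    simp [hp, Polynomial.IsRoot, sub_eq_zero]; exact hz
  calc Nat.card {z : F // z ^ 2 ^ m = z} = {z : F | z ^ 2 ^ m = z}.ncard :=
        (Nat.card_coe_set_eq _)
    _ ≤ (↑p.roots.toFinset : Set F).ncard := Set.ncard_le_ncard hsub (Set.toFinite _)
    _ = p.roots.toFinset.card := Set.ncard_coe_finset _
    _ ≤ Multiset.card p.roots := p.roots.toFinset_card_le
    _ ≤ p.natDegree := p.card_roots'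
    _ = 2 ^ m := FiniteField.X_pow_card_sub_X_natDegree_eq F h1

omit [Finite F] in
lemma aux_iter (z : F) (m : ℕ) (hm : z ^ 2 ^ m = z) (a : ℕ) : z ^ 2 ^ (m * a) = z := by
  induction a with
  | zero => simp
  | succ a ih =>
      have : 2 ^ (m * (a + 1)) = 2 ^ (m * a) * 2 ^ m := by rw [← pow_add]; ring_nf
      rw [this, pow_mul, ih, hm]

omit [Finite F] in
lemma aux_fix_gcd {n : ℕ} (hn : 0 < n) (z : F) (hzn : z ^ 2 ^ n = z) (m : ℕ)
    (hm : z ^ 2 ^ m = z) : z ^ 2 ^ Nat.gcd m n = z := by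
  rcases lt_or_ge (Nat.gcd m n) n with hlt | hge
  · obtain ⟨a, -, ha⟩ := Nat.exists_mul_mod_eq_gcd hlt
    have hdm : m * a = n * (m * a / n) + Nat.gcd m n := by
      conv_lhs => rw [← Nat.div_add_mod (m * a) n, ha]
    have h1 : z ^ 2 ^ (m * a) = z := aux_iter z m hm a
    rw [hdm, pow_add, pow_mul, aux_iter z n hzn _] at h1
    exact h1
  · have : Nat.gcd m n = n := le_antisymm (Nat.le_of_dvd hn (Nat.gcd_dvd_right m n)) hge
    rw [this]; exact hzn

omit [Field F] in
lemma aux_card_le_of_imp {p q : F → Prop} (h : ∀ z, p z → q z) :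
    Nat.card {z : F // p z} ≤ Nat.card {z : F // q z} :=
  Nat.card_le_card_of_injective (fun x => ⟨x.1, h _ x.2⟩)
    (fun a b hab => Subtype.ext (by simpa using congrArg Subtype.val hab))

lemma aux_card_comp_le (f g : F → F) (hg : ∀ a b, g (a - b) = g a - g b) :
    Nat.card {z : F // f (g z) = 0} ≤
      Nat.card {z : F // g z = 0} * Nat.card {y : F // f y = 0} := by
  classical
  haveI : Fintype F := Fintype.ofFinite F
  have hA : Nat.card {z : F // f (g z) = 0} = (Finset.univ.filter fun z : F => f (g z) = 0).card := by
    rw [Nat.card_eq_fintype_card, Fintype.card_subtype]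
  have hB : Nat.card {y : F // f y = 0} = (Finset.univ.filter fun y : F => f y = 0).card := by
    rw [Nat.card_eq_fintype_card, Fintype.card_subtype]
  have hK : Nat.card {z : F // g z = 0} = (Finset.univ.filter fun z : F => g z = 0).card := by
    rw [Nat.card_eq_fintype_card, Fintype.card_subtype]
  rw [hA, hB, hK]
  set A := Finset.univ.filter fun z : F => f (g z) = 0 with hAdef
  set B := Finset.univ.filter fun y : F => f y = 0 with hBdef
  set K := Finset.univ.filter fun z : F => g z = 0 with hKdef
  have himg : A.image g ⊆ B := by
    intro y hy
    obtain ⟨a, ha, rfl⟩ := Finset.mem_image.mp hy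
    simp only [hAdef, Finset.mem_filter] at ha
    simp [hBdef, ha.2]
  calc A.card ≤ K.card * (A.image g).card := by
        apply Finset.card_le_mul_card_image
        intro b hb
        obtain ⟨a0, _, ha0⟩ := Finset.mem_image.mp hb
        apply Finset.card_le_card_of_injOn (fun a => a - a0)
        · intro a ha
          simp only [Finset.mem_coe, Finset.mem_filter] at ha
          simp [hKdef, hg, ha.2, ha0]
        · intro x hx y hy hxy
          exact sub_left_injective hxy
    _ ≤ K.card * B.card := Nat.mul_le_mul_left _ (Finset.card_le_card himg)

end Aux

/-- For nonzero `v ∈ F_{2^n}` and `gcd(k,n) = e`, the kernel of the `F_2`-linear map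
`L(z) = v^{2^{2k}} z^{2^{4k}} + (v^{2^{2k}} + v^{2^k}) z^{2^{3k}} + (v^{2^k} + v) z^{2^k} + v z`
has size at most `2^{3e}` if `n` is odd and at most `2^{4e}` if `n` is even. -/
theorem stmt3 (n k e : ℕ) (hn : 0 < n) (hk : 0 < k) (he : Nat.gcd k n = e)
    (v : GaloisField 2 n) (hv : v ≠ 0) :
    (Odd n →
      Nat.card {z : GaloisField 2 n //
        v ^ (2 ^ (2 * k)) * z ^ (2 ^ (4 * k)) +
          (v ^ (2 ^ (2 * k)) + v ^ (2 ^ k)) * z ^ (2 ^ (3 * k)) +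
          (v ^ (2 ^ k) + v) * z ^ (2 ^ k) + v * z = 0} ≤ 2 ^ (3 * e)) ∧
    (Even n →
      Nat.card {z : GaloisField 2 n //
        v ^ (2 ^ (2 * k)) * z ^ (2 ^ (4 * k)) +
          (v ^ (2 ^ (2 * k)) + v ^ (2 ^ k)) * z ^ (2 ^ (3 * k)) +
          (v ^ (2 ^ k) + v) * z ^ (2 ^ k) + v * z = 0} ≤ 2 ^ (4 * e)) := by
  classical
  have he0 : 0 < e := he ▸ Nat.gcd_pos_of_pos_right k hn
  haveI : Fintype (GaloisField 2 n) := Fintype.ofFinite (GaloisField 2 n)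
  have hcard : Fintype.card (GaloisField 2 n) = 2 ^ n := by
    rw [← Nat.card_eq_fintype_card]; exact GaloisField.card 2 n hn.ne'
  have hall : ∀ z : GaloisField 2 n, z ^ 2 ^ n = z := fun z => by
    rw [← hcard]; exact FiniteField.pow_card z
  set T : GaloisField 2 n → GaloisField 2 n := fun z => z ^ 2 ^ k + z with hT
  set N : GaloisField 2 n → GaloisField 2 n :=
    fun w => v ^ 2 ^ k * w ^ 2 ^ (2 * k) + v * w with hN
  have h2 : (2 : GaloisField 2 n) = 0 := CharTwo.two_eq_zero
  have hfrob : ∀ (x y : GaloisField 2 n) (m : ℕ),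
      (x + y) ^ 2 ^ m = x ^ 2 ^ m + y ^ 2 ^ m := fun x y m => add_pow_char_pow x y 2 m
  have hfrobs : ∀ (x y : GaloisField 2 n) (m : ℕ),
      (x - y) ^ 2 ^ m = x ^ 2 ^ m - y ^ 2 ^ m := fun x y m => sub_pow_char_pow x y m
  -- the factorization identity L = T ∘ N ∘ T
  have hid : ∀ z : GaloisField 2 n,
      v ^ (2 ^ (2 * k)) * z ^ (2 ^ (4 * k)) +
        (v ^ (2 ^ (2 * k)) + v ^ (2 ^ k)) * z ^ (2 ^ (3 * k)) +
        (v ^ (2 ^ k) + v) * z ^ (2 ^ k) + v * z = T (N (T z)) := by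
    intro z
    simp only [hT, hN, hfrob, mul_pow, ← pow_mul, ← pow_add,
      show k + k = 2 * k by ring, show k + 2 * k + k = 4 * k by ring,
      show 2 * k + k = 3 * k by ring, show k + 2 * k = 3 * k by ring]
    linear_combination (-(v ^ 2 ^ k * z ^ 2 ^ (2 * k))) * h2
  -- subtraction-additivity of the pieces
  have hTsub : ∀ a b : GaloisField 2 n, T (a - b) = T a - T b := by
    intro a b; simp only [hT, hfrobs]; ring
  have hNsub : ∀ a b : GaloisField 2 n, N (a - b) = N a - N b := by
    intro a b; simp only [hN, hfrobs]; ring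
  have hNTsub : ∀ a b : GaloisField 2 n, N (T (a - b)) = N (T a) - N (T b) := by
    intro a b; rw [hTsub, hNsub]
  -- kernel of T has at most 2 ^ e elements
  have hkerT : Nat.card {z : GaloisField 2 n // T z = 0} ≤ 2 ^ e := by
    calc Nat.card {z : GaloisField 2 n // T z = 0}
        ≤ Nat.card {z : GaloisField 2 n // z ^ 2 ^ e = z} := by
          apply aux_card_le_of_imp
          intro z hz
          have hz' : z ^ 2 ^ k = z := by
            have h := hz
            simp only [hT] at h
            rwa [CharTwo.add_eq_iff_eq_add, zero_add] at h
          rw [← he]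
          exact aux_fix_gcd hn z (hall z) k hz'
      _ ≤ 2 ^ e := aux_fixed_card e he0
  -- kernel of N has at most 2 ^ gcd (2 k) n elements
  set d : ℕ := Nat.gcd (2 * k) n with hd
  have hd0 : 0 < d := Nat.gcd_pos_of_pos_right _ hn
  have hkerN : Nat.card {w : GaloisField 2 n // N w = 0} ≤ 2 ^ d := by
    by_cases hex : ∃ w0 : GaloisField 2 n, N w0 = 0 ∧ w0 ≠ 0
    · obtain ⟨w0, hw0, hw00⟩ := hex
      have hvq : (v : GaloisField 2 n) ^ 2 ^ k ≠ 0 := pow_ne_zero _ hv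
      have heq : ∀ w : GaloisField 2 n, N w = 0 → w ^ 2 ^ (2 * k) = (v / v ^ 2 ^ k) * w := by
        intro w hw
        simp only [hN] at hw
        rw [CharTwo.add_eq_iff_eq_add, zero_add] at hw
        rw [div_mul_eq_mul_div, eq_div_iff hvq]
        linear_combination hw
      have key : ∀ w : GaloisField 2 n, N w = 0 →
          (w * w0⁻¹) ^ 2 ^ (2 * k) = w * w0⁻¹ := by
        intro w hw
        have hc : (v / v ^ 2 ^ k) ≠ 0 := div_ne_zero hv hvq
        rw [mul_pow, inv_pow, heq w hw, heq w0 hw0]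
        field_simp
      have hinj : Nat.card {w : GaloisField 2 n // N w = 0}
          ≤ Nat.card {u : GaloisField 2 n // u ^ 2 ^ (2 * k) = u} := by
        apply Nat.card_le_card_of_injective
          (f := fun x : {w : GaloisField 2 n // N w = 0} =>
            (⟨x.1 * w0⁻¹, key x.1 x.2⟩ : {u : GaloisField 2 n // u ^ 2 ^ (2 * k) = u}))
        intro a b hab
        have : a.1 * w0⁻¹ = b.1 * w0⁻¹ := by simpa using congrArg Subtype.val hab
        exact Subtype.ext (mul_right_cancel₀ (inv_ne_zero hw00) this)
      calc Nat.card {w : GaloisField 2 n // N w = 0}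
          ≤ Nat.card {u : GaloisField 2 n // u ^ 2 ^ (2 * k) = u} := hinj
        _ ≤ Nat.card {u : GaloisField 2 n // u ^ 2 ^ d = u} := by
            apply aux_card_le_of_imp
            intro u hu
            exact aux_fix_gcd hn u (hall u) (2 * k) hu
        _ ≤ 2 ^ d := aux_fixed_card d hd0
    · push_neg at hex
      calc Nat.card {w : GaloisField 2 n // N w = 0}
          ≤ Nat.card {w : GaloisField 2 n // w = (0 : GaloisField 2 n)} :=
            aux_card_le_of_imp (fun w hw => hex w hw)
        _ = 1 := by simp
        _ ≤ 2 ^ d := Nat.one_le_two_pow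
  -- the main count via the factorization
  have hmain : Nat.card {z : GaloisField 2 n //
      v ^ (2 ^ (2 * k)) * z ^ (2 ^ (4 * k)) +
        (v ^ (2 ^ (2 * k)) + v ^ (2 ^ k)) * z ^ (2 ^ (3 * k)) +
        (v ^ (2 ^ k) + v) * z ^ (2 ^ k) + v * z = 0} ≤ 2 ^ (e + (e + d)) := by
    have hset : ∀ z : GaloisField 2 n,
        (v ^ (2 ^ (2 * k)) * z ^ (2 ^ (4 * k)) +
          (v ^ (2 ^ (2 * k)) + v ^ (2 ^ k)) * z ^ (2 ^ (3 * k)) +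
          (v ^ (2 ^ k) + v) * z ^ (2 ^ k) + v * z = 0) ↔ T (N (T z)) = 0 := fun z => by
      rw [hid z]
    calc Nat.card {z : GaloisField 2 n //
          v ^ (2 ^ (2 * k)) * z ^ (2 ^ (4 * k)) +
            (v ^ (2 ^ (2 * k)) + v ^ (2 ^ k)) * z ^ (2 ^ (3 * k)) +
            (v ^ (2 ^ k) + v) * z ^ (2 ^ k) + v * z = 0}
        = Nat.card {z : GaloisField 2 n // T (N (T z)) = 0} := by
          apply Nat.card_congr
          exact Equiv.subtypeEquivRight hset
      _ ≤ Nat.card {z : GaloisField 2 n // N (T z) = 0} *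
            Nat.card {y : GaloisField 2 n // T y = 0} :=
          aux_card_comp_le T (fun z => N (T z)) hNTsub
      _ ≤ (Nat.card {z : GaloisField 2 n // T z = 0} *
            Nat.card {y : GaloisField 2 n // N y = 0}) *
            Nat.card {y : GaloisField 2 n // T y = 0} := by
          exact Nat.mul_le_mul_right _ (aux_card_comp_le N T hTsub)
      _ ≤ (2 ^ e * 2 ^ d) * 2 ^ e := by
          exact Nat.mul_le_mul (Nat.mul_le_mul hkerT hkerN) hkerT
      _ = 2 ^ (e + (e + d)) := by rw [← pow_add, ← pow_add]; ring_nf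
  constructor
  · intro hodd
    have hde : d = e := by
      rw [hd, ← he]
      exact Nat.Coprime.gcd_mul_left_cancel k (Nat.coprime_two_left.mpr hodd)
    refine hmain.trans ?_
    rw [hde]
    exact Nat.pow_le_pow_right (by norm_num) (by omega)
  · intro _
    have hdle : d ≤ 2 * e := by
      have h1 : d ∣ 2 * e := by
        rw [← he, ← Nat.gcd_mul_left 2 k n]
        exact Nat.dvd_gcd (Nat.gcd_dvd_left _ _)
          ((Nat.gcd_dvd_right _ _).trans ⟨2, (mul_comm 2 n)⟩)
      exact Nat.le_of_dvd (by omega) h1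
    refine hmain.trans ?_
    exact Nat.pow_le_pow_right (by norm_num) (by omega)
end

section
/- Let n = 2m with m a positive integer and let λ be a nonzero element of F_{2^n}. Then #{θ ∈ μ_{2^m+1} : Tr(θλ) = 0} = (2^m + 2 − K_m(λ^{2^m+1}))/2 and #{θ ∈ μ_{2^m+1} : Tr(θλ) = 1} = (2^m + K_m(λ^{2^m+1}))/2, where λ^{2^m+1} is regarded as an element of the subfield F_{2^m}. -/
set_option synthInstance.maxHeartbeats 1000000
set_option maxHeartbeats 1000000

open scoped BigOperators Classical

def chi (b : ZMod 2) : ℤ := (-1) ^ b.val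

lemma chi_add (a b : ZMod 2) : chi (a + b) = chi a * chi b := by revert a b; decide

lemma chi_zero : chi 0 = 1 := rfl

lemma chi_one : chi 1 = -1 := rfl

-- balanced sum
lemma sum_chi_eq_zero {G : Type*} [AddCommGroup G] [Fintype G] (f : G → ZMod 2)
    (hadd : ∀ a b, f (a + b) = f a + f b) (h1 : ∃ g, f g = 1) :
    ∑ g, chi (f g) = 0 := by
  obtain ⟨g₀, hg₀⟩ := h1
  have h2 : ∑ g, chi (f g) = ∑ g, chi (f (g + g₀)) :=
    (Fintype.sum_equiv (Equiv.addRight g₀) _ _ (fun g => rfl)).symm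
  have h3 : ∀ g, chi (f (g + g₀)) = - chi (f g) := by
    intro g
    rw [hadd, chi_add, hg₀, chi_one]
    ring
  rw [Finset.sum_congr rfl (fun g _ => h3 g)] at h2
  rw [Finset.sum_neg_distrib] at h2
  omega

-- trace nondegeneracy
lemma tr_exists_one (k : ℕ) (hk : 0 < k) (a : GaloisField 2 k) (ha : a ≠ 0) :
    ∃ t, trF2 k (a * t) = 1 := by
  have hnd := traceForm_nondegenerate (ZMod 2) (GaloisField 2 k)
  by_contra hf
  push_neg at hf
  apply ha
  apply hnd.1
  intro t
  rw [Algebra.traceForm_apply]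
  have := hf t
  have h01 : ∀ x : ZMod 2, x ≠ 1 → x = 0 := by decide
  exact h01 _ this

-- root bounds
lemma card_filter_pow_eq_le {L : Type*} [Field L] [Fintype L] [DecidableEq L]
    (n : ℕ) (hn : 0 < n) (a : L) :
    (Finset.univ.filter fun x : L => x ^ n = a).card ≤ n := by
  have hsub : Finset.univ.filter (fun x : L => x ^ n = a)
      ⊆ (Polynomial.nthRoots n a).toFinset := by
    intro x hx
    simp only [Finset.mem_filter] at hx
    rw [Multiset.mem_toFinset, Polynomial.mem_nthRoots hn]
    exact hx.2
  calc (Finset.univ.filter fun x : L => x ^ n = a).card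
      ≤ (Polynomial.nthRoots n a).toFinset.card := Finset.card_le_card hsub
    _ ≤ Multiset.card (Polynomial.nthRoots n a) := Multiset.toFinset_card_le _
    _ ≤ n := Polynomial.card_nthRoots n a

lemma card_filter_pow_self_le {L : Type*} [Field L] [Fintype L] [DecidableEq L]
    (n : ℕ) (hn : 1 < n) :
    (Finset.univ.filter fun x : L => x ^ n = x).card ≤ n := by
  classical
  set p : Polynomial L := Polynomial.X ^ n - Polynomial.X with hp
  have hdeg : p.natDegree = n := by
    rw [hp]
    exact FiniteField.X_pow_card_sub_X_natDegree_eq L hn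
  have hp0 : p ≠ 0 := fun h => by simp [h] at hdeg; omega
  have hsub : Finset.univ.filter (fun x : L => x ^ n = x) ⊆ p.roots.toFinset := by
    intro x hx
    simp only [Finset.mem_filter] at hx
    rw [Multiset.mem_toFinset, Polynomial.mem_roots hp0]
    simp [hp, sub_eq_zero, hx.2]
  calc (Finset.univ.filter fun x : L => x ^ n = x).card
      ≤ p.roots.toFinset.card := Finset.card_le_card hsub
    _ ≤ Multiset.card p.roots := Multiset.toFinset_card_le _
    _ ≤ p.natDegree := Polynomial.card_roots' p
    _ = n := hdeg

section Counting

variable {L : Type*} [Field L] [Fintype L] [DecidableEq L] {q : ℕ}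

lemma pow_q_q (hcard : Fintype.card L = q ^ 2) (x : L) : (x ^ q) ^ q = x := by
  rw [← pow_mul, ← pow_two, ← hcard, FiniteField.pow_card]

lemma pow_q_succ_fix (hcard : Fintype.card L = q ^ 2) (x : L) :
    (x ^ (q + 1)) ^ q = x ^ (q + 1) := by
  have h1 : x ^ (q + 1) = x ^ q * x := pow_succ x q
  rw [h1, mul_pow, pow_q_q hcard, mul_comm]

lemma fiber_card_eq (b x₀ : L) (hx₀ : x₀ ≠ 0) (hx₀b : x₀ ^ (q + 1) = b) :
    (Finset.univ.filter fun x : L => x ^ (q + 1) = b).card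
      = (Finset.univ.filter fun x : L => x ^ (q + 1) = 1).card := by
  apply Finset.card_bij' (fun y _ => x₀⁻¹ * y) (fun θ _ => x₀ * θ)
  · intro y hy
    simp only [Finset.mem_filter, Finset.mem_univ, true_and] at *
    rw [mul_pow, hy, ← hx₀b, inv_pow, inv_mul_cancel₀ (pow_ne_zero _ hx₀)]
  · intro θ hθ
    simp only [Finset.mem_filter, Finset.mem_univ, true_and] at *
    rw [mul_pow, hθ, hx₀b, mul_one]
  · intro y _; field_simp
  · intro θ _; field_simp

theorem mu_card_and_fibers (hq : 2 ≤ q) (hcard : Fintype.card L = q ^ 2) :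
    (Finset.univ.filter fun x : L => x ^ (q + 1) = 1).card = q + 1 ∧
    (∀ b : L, b ≠ 0 → b ^ q = b →
      (Finset.univ.filter fun x : L => x ^ (q + 1) = b).card = q + 1) := by
  classical
  set S1 := Finset.univ.filter fun x : L => x ^ (q + 1) = 1 with hS1
  set T := Finset.univ.filter fun x : L => x ≠ 0 with hT
  set I := T.image (fun x => x ^ (q + 1)) with hI
  set Fix := Finset.univ.filter fun b : L => b ≠ 0 ∧ b ^ q = b with hFix
  have hTcard : T.card + 1 = q ^ 2 := by
    have he : T = Finset.univ.erase 0 := by ext x; simp [hT]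
    have hpos : 0 < Fintype.card L := Fintype.card_pos
    rw [he, Finset.card_erase_of_mem (Finset.mem_univ 0), Finset.card_univ, ← hcard]
    omega
  have hI_sub : I ⊆ Fix := by
    intro b hb
    rw [hI, Finset.mem_image] at hb
    obtain ⟨x, hx, rfl⟩ := hb
    rw [hT, Finset.mem_filter] at hx
    rw [hFix, Finset.mem_filter]
    exact ⟨Finset.mem_univ _, pow_ne_zero _ hx.2, pow_q_succ_fix hcard x⟩
  have hFix_card : Fix.card + 1 ≤ q := by
    have h0 : (0 : L) ∈ Finset.univ.filter fun x : L => x ^ q = x := by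
      simp [zero_pow (by omega : q ≠ 0)]
    have hsub2 : insert (0 : L) Fix ⊆ Finset.univ.filter fun x : L => x ^ q = x := by
      intro x hx
      rcases Finset.mem_insert.mp hx with rfl | hx
      · exact h0
      · rw [hFix, Finset.mem_filter] at hx
        simp [hx.2.2]
    have h0ni : (0 : L) ∉ Fix := by simp [hFix]
    calc Fix.card + 1 = (insert (0 : L) Fix).card := (Finset.card_insert_of_notMem h0ni).symm
      _ ≤ _ := Finset.card_le_card hsub2
      _ ≤ q := card_filter_pow_self_le q (by omega)
  have hS1_le : S1.card ≤ q + 1 := card_filter_pow_eq_le (q + 1) (by omega) 1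
  have hdecomp : T.card = ∑ b ∈ I, (T.filter fun x => x ^ (q + 1) = b).card :=
    Finset.card_eq_sum_card_image _ _
  have hfib : ∀ b ∈ I, (T.filter fun x => x ^ (q + 1) = b).card = S1.card := by
    intro b hb
    have hb' := hI_sub hb
    rw [hFix, Finset.mem_filter] at hb'
    obtain ⟨x₀, hx₀T, hx₀b⟩ := Finset.mem_image.mp hb
    rw [hT, Finset.mem_filter] at hx₀T
    have heq : T.filter (fun x => x ^ (q + 1) = b)
        = Finset.univ.filter fun x : L => x ^ (q + 1) = b := by
      ext x
      simp only [hT, Finset.filter_filter, Finset.mem_filter, Finset.mem_univ, true_and]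
      constructor
      · rintro ⟨_, h⟩; exact h
      · rintro h
        refine ⟨fun hx0 => ?_, h⟩
        rw [hx0, zero_pow (by omega : q + 1 ≠ 0)] at h
        exact hb'.2.1 h.symm
    rw [heq, fiber_card_eq b x₀ hx₀T.2 hx₀b]
  have hprod : I.card * S1.card + 1 = q ^ 2 := by
    rw [← hTcard, hdecomp, Finset.sum_congr rfl hfib, Finset.sum_const, smul_eq_mul]
  have hI_le : I.card + 1 ≤ q := le_trans (by
      have := Finset.card_le_card hI_sub; omega) hFix_card
  have hS1pos : 0 < S1.card := by
    refine Finset.card_pos.mpr ⟨1, ?_⟩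
    simp [hS1]
  -- integer arithmetic
  have hZ : (I.card : ℤ) * S1.card = q * q - 1 := by
    have h' : ((I.card * S1.card + 1 : ℕ) : ℤ) = ((q ^ 2 : ℕ) : ℤ) := by rw [hprod]
    push_cast at h'
    nlinarith [h']
  have haZ : (I.card : ℤ) + 1 ≤ q := by exact_mod_cast hI_le
  have hsZ : (S1.card : ℤ) ≤ q + 1 := by exact_mod_cast hS1_le
  have hS1card : S1.card = q + 1 := by
    by_contra h
    have hsq : (S1.card : ℤ) ≤ q := by
      have : S1.card ≤ q := by omega
      exact_mod_cast this
    have h1 : (I.card : ℤ) * S1.card ≤ ((q : ℤ) - 1) * S1.card :=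
      mul_le_mul_of_nonneg_right (by linarith) (by positivity)
    have h2 : ((q : ℤ) - 1) * S1.card ≤ ((q : ℤ) - 1) * q :=
      mul_le_mul_of_nonneg_left hsq (by
        have : (2 : ℤ) ≤ q := by exact_mod_cast hq
        linarith)
    have : (2 : ℤ) ≤ q := by exact_mod_cast hq
    nlinarith [hZ, h1, h2]
  refine ⟨hS1card, ?_⟩
  have haq : I.card + 1 = q := by
    have hs : (S1.card : ℤ) = q + 1 := by exact_mod_cast hS1card
    have : ((I.card : ℤ) + 1 - q) * (q + 1) = 0 := by
      rw [sub_mul, add_mul]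
      nlinarith [hZ, hs]
    have hq1 : ((q : ℤ) + 1) ≠ 0 := by positivity
    have := mul_eq_zero.mp this
    rcases this with h | h
    · have : (I.card : ℤ) + 1 = q := by linarith
      exact_mod_cast this
    · exact absurd h hq1
  have hIFix : I = Fix := by
    apply Finset.eq_of_subset_of_card_le hI_sub
    omega
  intro b hb0 hbq
  have hbI : b ∈ I := by
    rw [hIFix, hFix, Finset.mem_filter]
    exact ⟨Finset.mem_univ _, hb0, hbq⟩
  obtain ⟨x₀, hx₀T, hx₀b⟩ := Finset.mem_image.mp hbI
  rw [hT, Finset.mem_filter] at hx₀T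
  rw [fiber_card_eq b x₀ hx₀T.2 hx₀b, hS1card]

end Counting

section Bridge

variable {m : ℕ}

lemma cardK (hm : 0 < m) : Fintype.card (GaloisField 2 m) = 2 ^ m := by
  rw [← Nat.card_eq_fintype_card, GaloisField.card 2 m (by omega)]

lemma cardF (hm : 0 < m) : Fintype.card (GaloisField 2 (2 * m)) = (2 ^ m) ^ 2 := by
  rw [← Nat.card_eq_fintype_card, GaloisField.card 2 (2 * m) (by omega), mul_comm 2 m, pow_mul]

lemma pow_K (hm : 0 < m) (t : GaloisField 2 m) : t ^ 2 ^ m = t := by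
  have := FiniteField.pow_card t
  rwa [cardK hm] at this

lemma sigma_pow_q (hm : 0 < m) (σ : GaloisField 2 m →+* GaloisField 2 (2 * m))
    (t : GaloisField 2 m) : (σ t) ^ 2 ^ m = σ t := by
  rw [← map_pow, pow_K hm]

lemma range_sigma (hm : 0 < m) (σ : GaloisField 2 m →+* GaloisField 2 (2 * m))
    (z : GaloisField 2 (2 * m)) (hz : z ^ 2 ^ m = z) : ∃ t, σ t = z := by
  classical
  set Sq := Finset.univ.filter fun x : GaloisField 2 (2 * m) => x ^ 2 ^ m = x with hSq
  have hsub : Finset.univ.image σ ⊆ Sq := by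
    intro x hx
    obtain ⟨t, _, rfl⟩ := Finset.mem_image.mp hx
    simp [hSq, sigma_pow_q hm σ t]
  have hcard : Sq.card ≤ (Finset.univ.image σ).card := by
    rw [Finset.card_image_of_injective _ σ.injective, Finset.card_univ, cardK hm]
    exact card_filter_pow_self_le _ (by have := Nat.one_lt_two_pow_iff.mpr (by omega : m ≠ 0); omega)
  have heq : Finset.univ.image σ = Sq := Finset.eq_of_subset_of_card_le hsub hcard
  have hz' : z ∈ Sq := by simp [hSq, hz]
  rw [← heq, Finset.mem_image] at hz'
  obtain ⟨t, _, ht⟩ := hz'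
  exact ⟨t, ht⟩

theorem trace_bridge (hm : 0 < m) (σ : GaloisField 2 m →+* GaloisField 2 (2 * m))
    (y : GaloisField 2 (2 * m)) (t : GaloisField 2 m)
    (ht : σ t = y + y ^ 2 ^ m) : trF2 (2 * m) y = trF2 m t := by
  classical
  letI : Algebra (GaloisField 2 m) (GaloisField 2 (2 * m)) := σ.toAlgebra
  haveI : IsScalarTower (ZMod 2) (GaloisField 2 m) (GaloisField 2 (2 * m)) :=
    IsScalarTower.of_algebraMap_eq fun x => by
      exact RingHom.congr_fun (Subsingleton.elim
        ((algebraMap (GaloisField 2 m) (GaloisField 2 (2 * m))).comp (algebraMap (ZMod 2) (GaloisField 2 m)))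
        (algebraMap (ZMod 2) (GaloisField 2 (2 * m)))) x |>.symm
  have halg : ∀ s : GaloisField 2 m,
      algebraMap (GaloisField 2 m) (GaloisField 2 (2 * m)) s = σ s := fun s => rfl
  have hq2 : 2 ≤ 2 ^ m := by
    have := Nat.one_lt_two_pow_iff.mpr (by omega : m ≠ 0); omega
  have hchar2 : ∀ x : GaloisField 2 (2 * m), x + x = 0 := CharTwo.add_self_eq_zero
  have hchar2K : ∀ x : GaloisField 2 m, x + x = 0 := CharTwo.add_self_eq_zero
  have hfr : Module.finrank (GaloisField 2 m) (GaloisField 2 (2 * m)) = 2 := by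
    have h1 : Fintype.card (GaloisField 2 (2 * m))
        = Fintype.card (GaloisField 2 m) ^ Module.finrank (GaloisField 2 m) (GaloisField 2 (2 * m)) :=
      Module.card_eq_pow_finrank
    rw [cardF hm, cardK hm] at h1
    exact (Nat.pow_right_injective hq2 h1.symm)
  obtain ⟨w, hw⟩ : ∃ w : GaloisField 2 (2 * m), w ^ 2 ^ m ≠ w := by
    by_contra hc
    push_neg at hc
    have hsub : (Finset.univ : Finset (GaloisField 2 (2 * m)))
        ⊆ Finset.univ.filter fun x => x ^ 2 ^ m = x := by
      intro x _; simp [hc x]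
    have h1 := Finset.card_le_card hsub
    rw [Finset.card_univ, cardF hm] at h1
    have h2 := card_filter_pow_self_le (L := GaloisField 2 (2 * m)) (2 ^ m) (by omega)
    have h5 : 2 ^ m * 2 ≤ 2 ^ m * 2 ^ m := Nat.mul_le_mul_left _ hq2
    have h6 : 2 ^ m * 2 ^ m = (2 ^ m) ^ 2 := (sq (2 ^ m)).symm
    linarith [h1, h2, h5, h6.le, h6.ge]
  have hw0 : w ≠ 0 := by
    intro h; apply hw; rw [h, zero_pow (by positivity : (2:ℕ) ^ m ≠ 0)]
  have hli : LinearIndependent (GaloisField 2 m) ![(1 : GaloisField 2 (2 * m)), w] := by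
    rw [linearIndependent_fin2]
    constructor
    · simpa using hw0
    · intro a ha
      simp only [Matrix.cons_val_one, Matrix.head_cons, Matrix.cons_val_zero] at ha
      rw [Algebra.smul_def, halg] at ha
      have hwinv : w = (σ a)⁻¹ := eq_inv_of_mul_eq_one_left (mul_comm (σ a) w ▸ ha)
      apply hw
      rw [hwinv, ← map_inv₀, sigma_pow_q hm σ]
  have hcard2 : Fintype.card (Fin 2) = Module.finrank (GaloisField 2 m) (GaloisField 2 (2 * m)) := by
    simp [hfr]
  set B := basisOfLinearIndependentOfCardEqFinrank hli hcard2 with hBdef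
  have hB : ⇑B = ![(1 : GaloisField 2 (2 * m)), w] :=
    coe_basisOfLinearIndependentOfCardEqFinrank hli hcard2
  have hB0 : B 0 = 1 := by rw [hB]; rfl
  have hB1 : B 1 = w := by rw [hB]; rfl
  have hrepr0 : ∀ s u : GaloisField 2 m, B.repr (s • B 0 + u • B 1) 0 = s := by
    intro s u
    rw [map_add, map_smul, map_smul, B.repr_self, B.repr_self]
    simp [Finsupp.single_apply]
  have hrepr1 : ∀ s u : GaloisField 2 m, B.repr (s • B 0 + u • B 1) 1 = u := by
    intro s u
    rw [map_add, map_smul, map_smul, B.repr_self, B.repr_self]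
    simp [Finsupp.single_apply]
  set a := B.repr y 0 with hadef
  set b := B.repr y 1 with hbdef
  have hy : y = a • B 0 + b • B 1 := by
    have := B.sum_repr y
    rw [Fin.sum_univ_two] at this
    exact this.symm
  set c := B.repr (w ^ 2) 0 with hcdef
  set d := B.repr (w ^ 2) 1 with hddef
  have hw2 : w ^ 2 = c • B 0 + d • B 1 := by
    have := B.sum_repr (w ^ 2)
    rw [Fin.sum_univ_two] at this
    exact this.symm
  have hw2' : w * w = σ c + σ d * w := by
    have h := hw2
    rw [hB0, hB1, Algebra.smul_def, Algebra.smul_def, halg, halg, mul_one, pow_two] at h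
    exact h
  have hy' : y = σ a + σ b * w := by
    have h := hy
    rw [hB0, hB1, Algebra.smul_def, Algebra.smul_def, halg, halg, mul_one] at h
    exact h
  have htr : Algebra.trace (GaloisField 2 m) (GaloisField 2 (2 * m)) y = b * d := by
    rw [Algebra.trace_eq_matrix_trace B y, Matrix.trace_fin_two,
      Algebra.leftMulMatrix_eq_repr_mul, Algebra.leftMulMatrix_eq_repr_mul]
    have e0 : y * B 0 = a • B 0 + b • B 1 := by
      rw [hB0, mul_one, hy, hB0]
    have e1 : y * B 1 = (b * c) • B 0 + (a + b * d) • B 1 := by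
      rw [hB0, hB1]
      calc y * w = (σ a + σ b * w) * w := by rw [← hy']
        _ = σ a * w + σ b * (w * w) := by ring
        _ = σ a * w + σ b * (σ c + σ d * w) := by rw [hw2']
        _ = (b * c) • (1 : GaloisField 2 (2 * m)) + (a + b * d) • w := by
            rw [Algebra.smul_def, Algebra.smul_def, halg, halg, map_mul, map_add, map_mul]
            ring
    rw [e0, e1, hrepr0, hrepr1]
    calc a + (a + b * d) = (a + a) + b * d := by ring
      _ = b * d := by rw [hchar2K a, zero_add]
  have hwq_root : w ^ 2 ^ m * w ^ 2 ^ m = σ c + σ d * w ^ 2 ^ m := by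
    have h1 : w ^ 2 ^ m * w ^ 2 ^ m = (w * w) ^ 2 ^ m := by ring
    rw [h1, hw2', add_pow_char_pow, mul_pow, sigma_pow_q hm σ, sigma_pow_q hm σ]
  have hsum_ne : w + w ^ 2 ^ m ≠ 0 := by
    intro h
    apply hw
    have h2 : w + w ^ 2 ^ m = w + w := by rw [h, hchar2 w]
    have := add_left_cancel h2
    rw [this]
  have hwd : w + w ^ 2 ^ m = σ d := by
    have key : (w + w ^ 2 ^ m) * (w + w ^ 2 ^ m) = σ d * (w + w ^ 2 ^ m) := by
      calc (w + w ^ 2 ^ m) * (w + w ^ 2 ^ m)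
          = (w * w + w ^ 2 ^ m * w ^ 2 ^ m) + (w * w ^ 2 ^ m + w * w ^ 2 ^ m) := by ring
        _ = w * w + w ^ 2 ^ m * w ^ 2 ^ m := by rw [hchar2, add_zero]
        _ = (σ c + σ d * w) + (σ c + σ d * w ^ 2 ^ m) := by rw [hw2', hwq_root]
        _ = (σ c + σ c) + (σ d * w + σ d * w ^ 2 ^ m) := by ring
        _ = σ d * (w + w ^ 2 ^ m) := by rw [hchar2 (σ c), zero_add]; ring
    exact mul_right_cancel₀ hsum_ne key
  have hyq' : y ^ 2 ^ m = σ a + σ b * w ^ 2 ^ m := by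
    rw [hy', add_pow_char_pow, mul_pow, sigma_pow_q hm σ, sigma_pow_q hm σ]
  have hyq : y + y ^ 2 ^ m = σ (b * d) := by
    rw [hyq']
    nth_rewrite 1 [hy']
    calc σ a + σ b * w + (σ a + σ b * w ^ 2 ^ m)
        = (σ a + σ a) + σ b * (w + w ^ 2 ^ m) := by ring
      _ = σ b * σ d := by rw [hchar2 (σ a), hwd, zero_add]
      _ = σ (b * d) := by rw [map_mul]
  have htbd : t = b * d := σ.injective (by rw [ht, hyq])
  have hfin := Algebra.trace_trace (R := ZMod 2) (S := GaloisField 2 m)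
    (T := GaloisField 2 (2 * m)) y
  rw [htr] at hfin
  show Algebra.trace (ZMod 2) (GaloisField 2 (2 * m)) y = Algebra.trace (ZMod 2) (GaloisField 2 m) t
  rw [htbd, ← hfin]

end Bridge


section MainAux

lemma sum_chi_tr_mul (k : ℕ) (hk : 0 < k) (a : GaloisField 2 k) (ha : a ≠ 0) :
    ∑ t : GaloisField 2 k, chi (trF2 k (a * t)) = 0 := by
  apply sum_chi_eq_zero
  · intro x y
    show trF2 k (a * (x + y)) = _
    rw [mul_add]
    exact map_add (Algebra.trace (ZMod 2) (GaloisField 2 k)) _ _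
  · exact tr_exists_one k hk a ha

lemma tr_zero (k : ℕ) : trF2 k 0 = 0 :=
  map_zero (Algebra.trace (ZMod 2) (GaloisField 2 k))

lemma tr_add (k : ℕ) (x y : GaloisField 2 k) : trF2 k (x + y) = trF2 k x + trF2 k y :=
  map_add (Algebra.trace (ZMod 2) (GaloisField 2 k)) x y

lemma sum_chi_indicator (k : ℕ) (hk : 0 < k) (s : GaloisField 2 k) :
    ∑ u : GaloisField 2 k, chi (trF2 k (u * s)) = if s = 0 then ((2 ^ k : ℕ) : ℤ) else 0 := by
  split_ifs with h
  · subst h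
    have : ∀ u : GaloisField 2 k, chi (trF2 k (u * 0)) = 1 := by
      intro u; rw [mul_zero, tr_zero]; rfl
    rw [Finset.sum_congr rfl (fun u _ => this u), Finset.sum_const, Finset.card_univ, cardK hk]
    simp
  · rw [Finset.sum_congr rfl (fun u _ => by rw [mul_comm])]
    exact sum_chi_tr_mul k hk s h

end MainAux


/-- For `n = 2m` and nonzero `λ ∈ F_{2^n}`:
`#{θ ∈ μ_{2^m+1} : Tr(θλ) = 0} = (2^m + 2 - K_m(λ^{2^m+1}))/2` and
`#{θ ∈ μ_{2^m+1} : Tr(θλ) = 1} = (2^m + K_m(λ^{2^m+1}))/2`, where `λ^{2^m+1}` is identified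
with an element `γ` of `F_{2^m}` via a field embedding `σ : F_{2^m} → F_{2^n}`. -/
theorem stmt6 (m : ℕ) (hm : 0 < m) (lam : GaloisField 2 (2 * m)) (hlam : lam ≠ 0)
    (σ : GaloisField 2 m →+* GaloisField 2 (2 * m))
    (γ : GaloisField 2 m) (hγ : σ γ = lam ^ (2 ^ m + 1)) :
    (Nat.card {θ : GaloisField 2 (2 * m) //
        θ ^ (2 ^ m + 1) = 1 ∧ trF2 (2 * m) (θ * lam) = 0} : ℤ) =
      (2 ^ m + 2 - kloo m γ) / 2 ∧
    (Nat.card {θ : GaloisField 2 (2 * m) //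
        θ ^ (2 ^ m + 1) = 1 ∧ trF2 (2 * m) (θ * lam) = 1} : ℤ) =
      (2 ^ m + kloo m γ) / 2 := by
  classical
  have hFcard : Fintype.card (GaloisField 2 (2 * m)) = (2 ^ m) ^ 2 := cardF hm
  have hq2 : 2 ≤ 2 ^ m := by
    have := Nat.one_lt_two_pow_iff.mpr (by omega : m ≠ 0); omega
  have hqne : ((2 : ℤ) ^ m) ≠ 0 := by positivity
  set ρ : GaloisField 2 (2 * m) → GaloisField 2 m := Function.invFun σ with hρdef
  have hρσ : ∀ t, ρ (σ t) = t := fun t => Function.leftInverse_invFun σ.injective t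
  have hσρ : ∀ z, z ^ 2 ^ m = z → σ (ρ z) = z := by
    intro z hz
    obtain ⟨t, ht⟩ := range_sigma hm σ z hz
    rw [← ht, hρσ]
  have hfix : ∀ z : GaloisField 2 (2 * m), (z ^ (2 ^ m + 1)) ^ 2 ^ m = z ^ (2 ^ m + 1) :=
    fun z => pow_q_succ_fix hFcard z
  set d : GaloisField 2 (2 * m) → GaloisField 2 m :=
    fun y => ρ (y ^ (2 ^ m + 1) + σ γ) with hd
  set νf : GaloisField 2 (2 * m) → GaloisField 2 m :=
    fun z => ρ (z ^ (2 ^ m + 1)) with hν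
  set sf : GaloisField 2 (2 * m) → GaloisField 2 m :=
    fun y => ρ (y + y ^ 2 ^ m) with hsfdef
  have hσd : ∀ y, σ (d y) = y ^ (2 ^ m + 1) + σ γ := by
    intro y
    apply hσρ
    rw [add_pow_char_pow, hfix, sigma_pow_q hm σ]
  have hσν : ∀ z, σ (νf z) = z ^ (2 ^ m + 1) := fun z => hσρ _ (hfix z)
  have hσs : ∀ y, σ (sf y) = y + y ^ 2 ^ m := by
    intro y
    apply hσρ
    rw [add_pow_char_pow, pow_q_q hFcard, add_comm]
  have hbridge : ∀ y : GaloisField 2 (2 * m), trF2 (2 * m) y = trF2 m (sf y) :=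
    fun y => trace_bridge hm σ y (sf y) (hσs y)
  set μF := Finset.univ.filter (fun θ : GaloisField 2 (2 * m) => θ ^ (2 ^ m + 1) = 1) with hμF
  set S : ℤ := ∑ θ ∈ μF, chi (trF2 (2 * m) (θ * lam)) with hSdef
  have hσγ0 : σ γ ≠ 0 := by
    rw [hγ]
    exact pow_ne_zero _ hlam
  have hγ0 : γ ≠ 0 := fun h => hσγ0 (by rw [h, map_zero])
  -- Step B : S as a sum over the fiber of the norm above σ γ
  have hSB : S = ∑ y ∈ Finset.univ.filter
      (fun y : GaloisField 2 (2 * m) => y ^ (2 ^ m + 1) = σ γ), chi (trF2 (2 * m) y) := by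
    rw [hSdef]
    apply Finset.sum_nbij' (i := fun θ => θ * lam) (j := fun y => y * lam⁻¹)
    · intro a ha
      simp only [hμF, Finset.mem_filter, Finset.mem_univ, true_and] at ha ⊢
      rw [mul_pow, ha, one_mul, hγ]
    · intro y hy
      simp only [hμF, Finset.mem_filter, Finset.mem_univ, true_and] at hy ⊢
      rw [mul_pow, hy, hγ, inv_pow, mul_inv_cancel₀ (pow_ne_zero _ hlam)]
    · intro a _; field_simp
    · intro y _; field_simp
    · intro a _; rfl
  -- the double sum
  set A : ℤ := ∑ y : GaloisField 2 (2 * m),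
      (∑ u : GaloisField 2 m, chi (trF2 m (u * d y))) * chi (trF2 (2 * m) y) with hAdef
  have hdy0 : ∀ y, d y = 0 ↔ y ^ (2 ^ m + 1) = σ γ := by
    intro y
    rw [← map_eq_zero_iff σ σ.injective, hσd, CharTwo.add_eq_iff_eq_add, zero_add]
  have hA1 : A = (2 ^ m : ℤ) * S := by
    rw [hAdef, hSB]
    calc ∑ y : GaloisField 2 (2 * m),
        (∑ u : GaloisField 2 m, chi (trF2 m (u * d y))) * chi (trF2 (2 * m) y)
        = ∑ y : GaloisField 2 (2 * m),
            (if y ^ (2 ^ m + 1) = σ γ then ((2 ^ m : ℕ) : ℤ) else 0) * chi (trF2 (2 * m) y) := by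
          refine Finset.sum_congr rfl fun y _ => ?_
          rw [sum_chi_indicator m hm (d y), if_congr (hdy0 y) rfl rfl]
      _ = ∑ y : GaloisField 2 (2 * m),
            (if y ^ (2 ^ m + 1) = σ γ then ((2 ^ m : ℕ) : ℤ) * chi (trF2 (2 * m) y) else 0) := by
          refine Finset.sum_congr rfl fun y _ => ?_
          rw [ite_mul, zero_mul]
      _ = ∑ y ∈ Finset.univ.filter
            (fun y : GaloisField 2 (2 * m) => y ^ (2 ^ m + 1) = σ γ),
            ((2 ^ m : ℕ) : ℤ) * chi (trF2 (2 * m) y) := (Finset.sum_filter _ _).symm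
      _ = (2 ^ m : ℤ) * ∑ y ∈ Finset.univ.filter
            (fun y : GaloisField 2 (2 * m) => y ^ (2 ^ m + 1) = σ γ),
            chi (trF2 (2 * m) y) := by
          rw [← Finset.mul_sum]
          norm_num
  have hC : A = ∑ u : GaloisField 2 m, ∑ y : GaloisField 2 (2 * m),
      chi (trF2 m (u * d y) + trF2 (2 * m) y) := by
    rw [hAdef]
    calc ∑ y : GaloisField 2 (2 * m),
        (∑ u : GaloisField 2 m, chi (trF2 m (u * d y))) * chi (trF2 (2 * m) y)
        = ∑ y : GaloisField 2 (2 * m), ∑ u : GaloisField 2 m,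
            chi (trF2 m (u * d y) + trF2 (2 * m) y) := by
          refine Finset.sum_congr rfl fun y _ => ?_
          rw [Finset.sum_mul]
          exact Finset.sum_congr rfl fun u _ => (chi_add _ _).symm
      _ = _ := Finset.sum_comm
  -- inner sum for u = 0
  have hu0 : ∑ y : GaloisField 2 (2 * m),
      chi (trF2 m ((0 : GaloisField 2 m) * d y) + trF2 (2 * m) y) = 0 := by
    have h1 : ∀ y : GaloisField 2 (2 * m),
        trF2 m ((0 : GaloisField 2 m) * d y) + trF2 (2 * m) y = trF2 (2 * m) y := by
      intro y; rw [zero_mul, tr_zero, zero_add]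
    rw [Finset.sum_congr rfl fun y _ => by rw [h1 y]]
    apply sum_chi_eq_zero
    · exact tr_add (2 * m)
    · obtain ⟨t, ht⟩ := tr_exists_one (2 * m) (by omega) 1 one_ne_zero
      exact ⟨t, by rwa [one_mul] at ht⟩
  -- key Gauss-type inner sum
  have hkey : ∀ u : GaloisField 2 m, u ≠ 0 →
      ∑ z : GaloisField 2 (2 * m), chi (trF2 m (u * νf z)) = -((2 ^ m : ℕ) : ℤ) := by
    intro u hu
    have hν0 : νf (0 : GaloisField 2 (2 * m)) = 0 := by
      apply σ.injective
      rw [hσν, zero_pow (by omega : 2 ^ m + 1 ≠ 0), map_zero]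
    have hT : (Finset.univ : Finset (GaloisField 2 (2 * m))) \ {0}
        = Finset.univ.filter (fun z : GaloisField 2 (2 * m) => z ≠ 0) := by
      ext z; simp
    rw [Finset.sum_eq_sum_sdiff_singleton_add (Finset.mem_univ (0 : GaloisField 2 (2 * m))), hT]
    have hterm0 : chi (trF2 m (u * νf 0)) = 1 := by
      rw [hν0, mul_zero, tr_zero]; rfl
    rw [hterm0]
    have hmaps : ∀ z ∈ Finset.univ.filter (fun z : GaloisField 2 (2 * m) => z ≠ 0),
        νf z ∈ Finset.univ.filter (fun v : GaloisField 2 m => v ≠ 0) := by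
      intro z hz
      simp only [Finset.mem_filter, Finset.mem_univ, true_and] at hz ⊢
      intro h
      have := hσν z
      rw [h, map_zero] at this
      apply hz
      by_contra hz0
      exact (pow_ne_zero (2 ^ m + 1) hz0) this.symm
    rw [← Finset.sum_fiberwise_of_maps_to hmaps (fun z => chi (trF2 m (u * νf z)))]
    have hinner : ∀ v ∈ Finset.univ.filter (fun v : GaloisField 2 m => v ≠ 0),
        ∑ z ∈ (Finset.univ.filter (fun z : GaloisField 2 (2 * m) => z ≠ 0)).filter
          (fun z => νf z = v), chi (trF2 m (u * νf z))
        = ((2 ^ m + 1 : ℕ) : ℤ) * chi (trF2 m (u * v)) := by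
      intro v hv
      simp only [Finset.mem_filter, Finset.mem_univ, true_and] at hv
      have hfeq : (Finset.univ.filter (fun z : GaloisField 2 (2 * m) => z ≠ 0)).filter
          (fun z => νf z = v)
          = Finset.univ.filter (fun z : GaloisField 2 (2 * m) => z ^ (2 ^ m + 1) = σ v) := by
        ext z
        simp only [Finset.filter_filter, Finset.mem_filter, Finset.mem_univ, true_and]
        constructor
        · rintro ⟨hz0, hzv⟩
          rw [← hσν z, hzv]
        · intro h
          have hz0 : z ≠ 0 := by
            intro hz
            rw [hz, zero_pow (by omega : 2 ^ m + 1 ≠ 0)] at h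
            exact hv (σ.injective (by rw [map_zero, h]))
          refine ⟨hz0, σ.injective ?_⟩
          rw [hσν z, h]
      have hcard : ((Finset.univ.filter (fun z : GaloisField 2 (2 * m) => z ≠ 0)).filter
          (fun z => νf z = v)).card = 2 ^ m + 1 := by
        rw [hfeq]
        exact (mu_card_and_fibers hq2 hFcard).2 (σ v)
          (fun h => hv (σ.injective (by rw [h, map_zero]))) (sigma_pow_q hm σ v)
      have hval : ∀ z ∈ (Finset.univ.filter (fun z : GaloisField 2 (2 * m) => z ≠ 0)).filter
          (fun z => νf z = v), chi (trF2 m (u * νf z)) = chi (trF2 m (u * v)) := by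
        intro z hz
        rw [Finset.mem_filter] at hz
        rw [hz.2]
      rw [Finset.sum_congr rfl hval, Finset.sum_const, hcard, nsmul_eq_mul]
    rw [Finset.sum_congr rfl hinner, ← Finset.mul_sum]
    have hsumK : ∑ v ∈ Finset.univ.filter (fun v : GaloisField 2 m => v ≠ 0),
        chi (trF2 m (u * v)) = -1 := by
      have hTK : (Finset.univ : Finset (GaloisField 2 m)) \ {0}
          = Finset.univ.filter (fun v : GaloisField 2 m => v ≠ 0) := by
        ext v; simp
      have h1 := Finset.sum_eq_sum_sdiff_singleton_add (Finset.mem_univ (0 : GaloisField 2 m))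
        (fun v => chi (trF2 m (u * v)))
      rw [hTK, sum_chi_tr_mul m hm u hu] at h1
      have h2 : chi (trF2 m (u * 0)) = 1 := by rw [mul_zero, tr_zero]; rfl
      rw [h2] at h1
      linarith
    rw [hsumK]
    push_cast
    ring
  -- inner sum for u ≠ 0
  have hu1 : ∀ u : GaloisField 2 m, u ≠ 0 →
      ∑ y : GaloisField 2 (2 * m), chi (trF2 m (u * d y) + trF2 (2 * m) y)
        = -((2 ^ m : ℕ) : ℤ) * chi (trF2 m (γ * u + u⁻¹)) := by
    intro u hu
    have he : σ u * σ u⁻¹ = 1 := by rw [← map_mul, mul_inv_cancel₀ hu, map_one]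
    have hcomb : ∀ y : GaloisField 2 (2 * m),
        trF2 m (u * d y) + trF2 (2 * m) y
          = trF2 m (u * νf (y + σ u⁻¹) + (u⁻¹ + u * γ)) := by
      intro y
      rw [hbridge y, ← tr_add]
      congr 1
      apply σ.injective
      have hL : σ (u * d y + sf y)
          = σ u * (y ^ (2 ^ m + 1) + σ γ) + (y + y ^ 2 ^ m) := by
        rw [map_add, map_mul, hσd, hσs]
      have hR : σ (u * νf (y + σ u⁻¹) + (u⁻¹ + u * γ))
          = σ u * ((y + σ u⁻¹) ^ (2 ^ m + 1)) + (σ u⁻¹ + σ u * σ γ) := by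
        rw [map_add, map_mul, hσν, map_add, map_mul]
      rw [hL, hR]
      have hexp : (y + σ u⁻¹) ^ (2 ^ m + 1) = (y ^ 2 ^ m + σ u⁻¹) * (y + σ u⁻¹) := by
        rw [pow_succ, add_pow_char_pow, sigma_pow_q hm σ]
      rw [hexp]
      have hy1 : y ^ 2 ^ m * y = y ^ (2 ^ m + 1) := (pow_succ y (2 ^ m)).symm
      have hee : σ u⁻¹ + σ u⁻¹ = 0 := CharTwo.add_self_eq_zero _
      linear_combination (- σ u) * hy1 - (y ^ 2 ^ m + y + σ u⁻¹) * he - hee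
    rw [Finset.sum_congr rfl fun y _ => congrArg chi (hcomb y)]
    have hre : ∑ y : GaloisField 2 (2 * m), chi (trF2 m (u * νf (y + σ u⁻¹) + (u⁻¹ + u * γ)))
        = ∑ z : GaloisField 2 (2 * m), chi (trF2 m (u * νf z + (u⁻¹ + u * γ))) :=
      Fintype.sum_equiv (Equiv.addRight (σ u⁻¹)) _ _ (fun y => rfl)
    rw [hre]
    have hsplit : ∀ z : GaloisField 2 (2 * m),
        chi (trF2 m (u * νf z + (u⁻¹ + u * γ)))
          = chi (trF2 m (u * νf z)) * chi (trF2 m (u⁻¹ + u * γ)) := by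
      intro z; rw [tr_add, chi_add]
    rw [Finset.sum_congr rfl fun z _ => hsplit z, ← Finset.sum_mul, hkey u hu]
    have harg : u⁻¹ + u * γ = γ * u + u⁻¹ := by ring
    rw [harg]
  -- assemble A
  have hA2 : A = -((2 ^ m : ℕ) : ℤ) * (kloo m γ - 1) := by
    rw [hC]
    have hper : ∀ u : GaloisField 2 m,
        ∑ y : GaloisField 2 (2 * m), chi (trF2 m (u * d y) + trF2 (2 * m) y)
          = if u = 0 then 0 else -((2 ^ m : ℕ) : ℤ) * chi (trF2 m (γ * u + u⁻¹)) := by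
      intro u
      by_cases h : u = 0
      · subst h; rw [if_pos rfl]; exact hu0
      · rw [if_neg h]; exact hu1 u h
    rw [Finset.sum_congr rfl fun u _ => hper u]
    have hkl : kloo m γ = ∑ u : GaloisField 2 m, chi (trF2 m (γ * u + u⁻¹)) := rfl
    have hTK : (Finset.univ : Finset (GaloisField 2 m)) \ {0}
        = Finset.univ.filter (fun v : GaloisField 2 m => v ≠ 0) := by
      ext v; simp
    have h1 := Finset.sum_eq_sum_sdiff_singleton_add (Finset.mem_univ (0 : GaloisField 2 m))
      (fun u => chi (trF2 m (γ * u + u⁻¹)))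
    have h0term : chi (trF2 m (γ * 0 + 0⁻¹)) = 1 := by
      rw [mul_zero, inv_zero, add_zero, tr_zero]; rfl
    rw [hTK, h0term, ← hkl] at h1
    have h2 : ∑ u : GaloisField 2 m,
        (if u = 0 then 0 else -((2 ^ m : ℕ) : ℤ) * chi (trF2 m (γ * u + u⁻¹)))
        = ∑ u ∈ Finset.univ.filter (fun v : GaloisField 2 m => v ≠ 0),
            -((2 ^ m : ℕ) : ℤ) * chi (trF2 m (γ * u + u⁻¹)) := by
      rw [Finset.sum_filter]
      refine Finset.sum_congr rfl fun u _ => ?_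
      by_cases h : u = 0
      · simp [h]
      · simp [h]
    rw [h2, ← Finset.mul_sum]
    have h3 : ∑ u ∈ Finset.univ.filter (fun v : GaloisField 2 m => v ≠ 0),
        chi (trF2 m (γ * u + u⁻¹)) = kloo m γ - 1 := by linarith
    rw [h3]
  -- S = 1 - kloo
  have hSval : S = 1 - kloo m γ := by
    have : (2 ^ m : ℤ) * S = (2 ^ m : ℤ) * (1 - kloo m γ) := by
      rw [← hA1, hA2]
      push_cast
      ring
    exact mul_left_cancel₀ hqne this
  -- final counting
  have hμcard : μF.card = 2 ^ m + 1 := (mu_card_and_fibers hq2 hFcard).1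
  have hzmod : ∀ x : ZMod 2, ¬ x = 0 ↔ x = 1 := by decide
  set N0 := (Finset.univ.filter fun θ : GaloisField 2 (2 * m) =>
    θ ^ (2 ^ m + 1) = 1 ∧ trF2 (2 * m) (θ * lam) = 0).card with hN0
  set N1 := (Finset.univ.filter fun θ : GaloisField 2 (2 * m) =>
    θ ^ (2 ^ m + 1) = 1 ∧ trF2 (2 * m) (θ * lam) = 1).card with hN1
  have hf0 : μF.filter (fun θ => trF2 (2 * m) (θ * lam) = 0)
      = Finset.univ.filter fun θ : GaloisField 2 (2 * m) =>
        θ ^ (2 ^ m + 1) = 1 ∧ trF2 (2 * m) (θ * lam) = 0 := by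
    rw [hμF, Finset.filter_filter]
  have hf1 : μF.filter (fun θ => ¬ trF2 (2 * m) (θ * lam) = 0)
      = Finset.univ.filter fun θ : GaloisField 2 (2 * m) =>
        θ ^ (2 ^ m + 1) = 1 ∧ trF2 (2 * m) (θ * lam) = 1 := by
    rw [hμF, Finset.filter_filter]
    ext θ
    simp only [Finset.mem_filter, Finset.mem_univ, true_and]
    rw [hzmod]
  have hsum01 : N0 + N1 = 2 ^ m + 1 := by
    rw [hN0, hN1, ← hf0, ← hf1, ← hμcard]
    exact Finset.card_filter_add_card_filter_not _
  have hdiff : (N0 : ℤ) - N1 = S := by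
    rw [hSdef, ← Finset.sum_filter_add_sum_filter_not μF
      (fun θ => trF2 (2 * m) (θ * lam) = 0)]
    have ha : ∑ θ ∈ μF.filter (fun θ => trF2 (2 * m) (θ * lam) = 0),
        chi (trF2 (2 * m) (θ * lam)) = (N0 : ℤ) := by
      rw [Finset.sum_congr rfl (fun θ hθ => by
        rw [Finset.mem_filter] at hθ
        rw [hθ.2]
        rfl : ∀ θ ∈ μF.filter (fun θ => trF2 (2 * m) (θ * lam) = 0),
          chi (trF2 (2 * m) (θ * lam)) = (1 : ℤ))]
      rw [Finset.sum_const, hN0, ← hf0]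
      simp
    have hb : ∑ θ ∈ μF.filter (fun θ => ¬ trF2 (2 * m) (θ * lam) = 0),
        chi (trF2 (2 * m) (θ * lam)) = -(N1 : ℤ) := by
      rw [Finset.sum_congr rfl (fun θ hθ => by
        rw [Finset.mem_filter] at hθ
        rw [(hzmod _).mp hθ.2]
        rfl : ∀ θ ∈ μF.filter (fun θ => ¬ trF2 (2 * m) (θ * lam) = 0),
          chi (trF2 (2 * m) (θ * lam)) = (-1 : ℤ))]
      rw [Finset.sum_const, hN1, ← hf1]
      simp
    rw [ha, hb]
    ring
  have hcard0 : (Nat.card {θ : GaloisField 2 (2 * m) //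
      θ ^ (2 ^ m + 1) = 1 ∧ trF2 (2 * m) (θ * lam) = 0} : ℤ) = (N0 : ℤ) := by
    rw [Nat.card_eq_fintype_card, Fintype.card_subtype, hN0]
  have hcard1 : (Nat.card {θ : GaloisField 2 (2 * m) //
      θ ^ (2 ^ m + 1) = 1 ∧ trF2 (2 * m) (θ * lam) = 1} : ℤ) = (N1 : ℤ) := by
    rw [Nat.card_eq_fintype_card, Fintype.card_subtype, hN1]
  have hs01 : (N0 : ℤ) + N1 = 2 ^ m + 1 := by
    have h := hsum01
    have : ((N0 + N1 : ℕ) : ℤ) = ((2 ^ m + 1 : ℕ) : ℤ) := by rw [h]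
    push_cast at this
    linarith
  rw [hcard0, hcard1]
  constructor
  · omega
  · omega
end

section
/- Let n and k be positive integers with gcd(k,n) = 1, let a_{ij} ∈ F_{2^n} for 0 ≤ i < j ≤ n−1, and let G(x) = x^{2^{2k}+2^k+1} + Σ_{0 ≤ i < j ≤ n−1} a_{ij} x^{2^i+2^j} as a function on F_{2^n}. If n is odd then DLU_G ≤ 2^{(n+1)/2}, and if n is even then DLU_G ≤ 2^{n/2+1}. -/
open scoped BigOperators Classical

namespace DLUProof

variable {n : ℕ}

lemma Ecard (hn : 0 < n) : Fintype.card (GaloisField 2 n) = 2 ^ n := by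
  rw [← Nat.card_eq_fintype_card]; exact GaloisField.card 2 n hn.ne'

lemma pow_card_self (hn : 0 < n) (x : GaloisField 2 n) : x ^ 2 ^ n = x := by
  have := FiniteField.pow_card x
  rwa [← Nat.card_eq_fintype_card, GaloisField.card 2 n hn.ne'] at this

lemma pow_pow_add (x : GaloisField 2 n) (a b : ℕ) : x ^ 2 ^ (a + b) = (x ^ 2 ^ a) ^ 2 ^ b := by
  rw [← pow_mul, ← pow_add]

lemma pow_mul_n (hn : 0 < n) (x : GaloisField 2 n) (t : ℕ) : x ^ 2 ^ (n * t) = x := by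
  induction t with
  | zero => simp
  | succ t ih => rw [Nat.mul_succ, pow_pow_add, ih, pow_card_self hn]

lemma pow_red (hn : 0 < n) (x : GaloisField 2 n) (a : ℕ) : x ^ 2 ^ a = x ^ 2 ^ (a % n) := by
  conv_lhs => rw [← Nat.mod_add_div a n]
  rw [pow_pow_add, pow_mul_n hn]

lemma pow_congr_mod (hn : 0 < n) (x : GaloisField 2 n) {a b : ℕ} (h : a % n = b % n) :
    x ^ 2 ^ a = x ^ 2 ^ b := by rw [pow_red hn x a, pow_red hn x b, h]

lemma hfix (hn : 0 < n) {k : ℕ} (he : Nat.gcd k n = 1)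
    (x : GaloisField 2 n) (h : x ^ 2 ^ k = x) : x = 0 ∨ x = 1 := by
  have hsq : x ^ (2:ℕ) = x := by
    rcases Nat.lt_or_ge n 2 with h1 | h2
    · interval_cases n
      · simpa using pow_card_self hn x
    · have hpow : ∀ t : ℕ, x ^ 2 ^ (k * t) = x := by
        intro t
        induction t with
        | zero => simp
        | succ t ih => rw [Nat.mul_succ, pow_pow_add, ih, h]
      obtain ⟨a, -, ha⟩ := Nat.exists_mul_mod_eq_one_of_coprime (he : Nat.Coprime k n) h2
      have hab : k * a = n * (k * a / n) + 1 := by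
        conv_lhs => rw [← Nat.div_add_mod (k * a) n]
        rw [ha]
      have h2' := hpow a
      rw [hab, pow_pow_add, pow_mul_n hn] at h2'
      simpa using h2'
  have h3 : x * (x - 1) = 0 := by linear_combination hsq
  rcases mul_eq_zero.mp h3 with h4 | h4
  · exact Or.inl h4
  · exact Or.inr (by linear_combination h4)

lemma char2E (x : GaloisField 2 n) : x + x = 0 := by
  have h2 : (2 : GaloisField 2 n) = 0 := by
    exact_mod_cast CharP.cast_eq_zero (GaloisField 2 n) 2
  linear_combination x * h2

lemma add_self_eq (x y : GaloisField 2 n) : x + y = 0 ↔ x = y := by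
  constructor
  · intro h; linear_combination h - char2E y
  · rintro rfl; exact char2E _

lemma frob_add (x y : GaloisField 2 n) (m : ℕ) :
    (x + y) ^ 2 ^ m = x ^ 2 ^ m + y ^ 2 ^ m := add_pow_char_pow x y 2 m


lemma tr_sq (x : GaloisField 2 n) : trF2 n (x ^ (2:ℕ)) = trF2 n x := by
  have hφ : ∀ r : ZMod 2, (frobeniusEquiv (GaloisField 2 n) 2)
      ((algebraMap (ZMod 2) (GaloisField 2 n)) r) = algebraMap (ZMod 2) (GaloisField 2 n) r := by
    intro r
    show (algebraMap (ZMod 2) (GaloisField 2 n) r) ^ 2 = _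
    rw [← map_pow, ZMod.pow_card]
  let φA : GaloisField 2 n ≃ₐ[ZMod 2] GaloisField 2 n :=
    AlgEquiv.ofRingEquiv (f := frobeniusEquiv (GaloisField 2 n) 2) hφ
  apply (algebraMap (ZMod 2) (GaloisField 2 n)).injective
  unfold trF2
  rw [trace_eq_sum_automorphisms, trace_eq_sum_automorphisms]
  have hx : ∀ σ : GaloisField 2 n ≃ₐ[ZMod 2] GaloisField 2 n,
      σ (x ^ (2:ℕ)) = (σ * φA) x := by
    intro σ
    rw [AlgEquiv.mul_apply]
    congr 1
  rw [Finset.sum_congr rfl (fun σ _ => hx σ)]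
  exact Fintype.sum_bijective (· * φA) (Group.mulRight_bijective φA) _ _ (fun σ => rfl)

lemma tr_add (x y : GaloisField 2 n) : trF2 n (x + y) = trF2 n x + trF2 n y := by
  unfold trF2; exact map_add _ x y

lemma tr_zero : trF2 n 0 = 0 := by unfold trF2; exact map_zero _

lemma tr_pow_pow (x : GaloisField 2 n) (m : ℕ) : trF2 n (x ^ 2 ^ m) = trF2 n x := by
  induction m with
  | zero => simp
  | succ m ih =>
    have h1 : x ^ 2 ^ (m+1) = (x ^ 2 ^ m) ^ (2:ℕ) := by rw [← pow_mul, pow_succ]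
    rw [h1, tr_sq, ih]

lemma tr_nondeg (y : GaloisField 2 n) (h : ∀ x, trF2 n (x * y) = 0) : y = 0 := by
  have hnd := traceForm_nondegenerate (ZMod 2) (GaloisField 2 n)
  refine hnd.1 y ?_
  intro x
  have hx := h x
  unfold trF2 at hx
  simpa [Algebra.traceForm_apply, mul_comm] using hx

lemma ore (hn : 0 < n) {k : ℕ} (he : Nat.gcd k n = 1) (d : ℕ) :
    ∀ c : ℕ → GaloisField 2 n,
      (∃ x, ∑ i ∈ Finset.range (d+1), c i * x ^ 2 ^ (k*i) ≠ 0) →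
      (Finset.univ.filter
        (fun x : GaloisField 2 n => ∑ i ∈ Finset.range (d+1), c i * x ^ 2 ^ (k*i) = 0)).card
        ≤ 2 ^ d := by
  induction d with
  | zero =>
    intro c hL
    obtain ⟨x0, hx0⟩ := hL
    simp only [Finset.sum_range_one, Nat.mul_zero, pow_zero, pow_one] at hx0 ⊢
    have hc0 : c 0 ≠ 0 := fun h => hx0 (by simp [h])
    have hsub : (Finset.univ.filter (fun x : GaloisField 2 n => c 0 * x = 0)) ⊆ {0} := by
      intro x hx
      simp only [Finset.mem_filter, Finset.mem_univ, true_and] at hx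
      simp only [Finset.mem_singleton]
      rcases mul_eq_zero.mp hx with h | h
      · exact absurd h hc0
      · exact h
    simpa using Finset.card_le_card hsub
  | succ d ih =>
    intro c hL
    set L : GaloisField 2 n → GaloisField 2 n :=
      fun x => ∑ i ∈ Finset.range (d+2), c i * x ^ 2 ^ (k*i) with hLdef
    by_cases hker : ∀ x, L x = 0 → x = 0
    · calc (Finset.univ.filter (fun x => L x = 0)).card
          ≤ ({0} : Finset (GaloisField 2 n)).card := by
            apply Finset.card_le_card
            intro x hx
            simp only [Finset.mem_filter, Finset.mem_univ, true_and] at hx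
            simp [hker x hx]
        _ ≤ 2 ^ (d+1) := by simp [Nat.one_le_two_pow]
    · push_neg at hker
      obtain ⟨v, hv0, hvne⟩ := hker
      have hvk : v ^ 2 ^ k ≠ 0 := pow_ne_zero _ hvne
      set a : GaloisField 2 n := v ^ 2 ^ k * v⁻¹ with hadef
      have ha : a ≠ 0 := mul_ne_zero hvk (inv_ne_zero hvne)
      set e' : ℕ → GaloisField 2 n :=
        fun i => Nat.rec (c (d+1)) (fun i prev => c (d - i) + a ^ 2 ^ (k*(d - i)) * prev) i
        with he'def
      set c' : ℕ → GaloisField 2 n := fun j => e' (d - j) with hc'def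
      have hc'd : c' d = c (d+1) := by simp [hc'def, he'def]
      have hrec : ∀ j, j < d → c' j = c (j+1) + a ^ 2 ^ (k*(j+1)) * c' (j+1) := by
        intro j hj
        have h1 : d - j = (d - j - 1) + 1 := by omega
        have h2 : d - (d - j - 1) = j + 1 := by omega
        calc c' j = e' ((d - j - 1) + 1) := by rw [hc'def]; simp only []; rw [← h1]
          _ = c (d - (d - j - 1)) + a ^ 2 ^ (k*(d - (d - j - 1))) * e' (d - j - 1) := rfl
          _ = c (j+1) + a ^ 2 ^ (k*(j+1)) * c' (j+1) := by
              simp only [hc'def]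
              rw [h2, show d - (j+1) = d - j - 1 from by omega]
      set g : GaloisField 2 n → GaloisField 2 n := fun x => x ^ 2 ^ k + a * x with hgdef
      have hgpow : ∀ (x : GaloisField 2 n) (j : ℕ), (g x) ^ 2 ^ (k*j)
          = x ^ 2 ^ (k*(j+1)) + a ^ 2 ^ (k*j) * x ^ 2 ^ (k*j) := by
        intro x j
        rw [hgdef]
        simp only []
        rw [frob_add, mul_pow, ← pow_pow_add]
        congr 2
        ring
      set r : GaloisField 2 n := c 0 + a * c' 0 with hrdef
      -- downward telescope
      have htel : ∀ (x : GaloisField 2 n) (t m : ℕ), m + t = d →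
          ∑ j ∈ Finset.Ico m (d+1), c' j * (g x) ^ 2 ^ (k*j)
            = (∑ i ∈ Finset.Ico (m+1) (d+2), c i * x ^ 2 ^ (k*i))
              + c' m * (a ^ 2 ^ (k*m) * x ^ 2 ^ (k*m)) := by
        intro x t
        induction t with
        | zero =>
          intro m hm
          subst d
          simp only [Nat.add_zero] at *
          rw [Finset.sum_Ico_eq_sum_range, Finset.sum_Ico_eq_sum_range]
          simp only [show m + 1 - m = 1 from by omega, show m + 2 - (m+1) = 1 from by omega,
            Finset.sum_range_one, Nat.add_zero]
          rw [hgpow x m, hc'd]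
          ring
        | succ t iht =>
          intro m hm
          have hmd : m < d := by omega
          rw [Finset.sum_eq_sum_Ico_succ_bot (by omega : m < d + 1)]
          rw [iht (m+1) (by omega)]
          rw [Finset.sum_eq_sum_Ico_succ_bot (by omega : m + 1 < d + 2)]
          rw [hgpow x m, hrec m hmd]
          have hcc := char2E (a ^ 2 ^ (k*(m+1)) * c' (m+1) * x ^ 2 ^ (k*(m+1)))
          linear_combination (x ^ 2 ^ (k*(m+1))) *
            (mul_comm (a ^ 2 ^ (k*(m+1))) (c' (m+1))) + hcc
      have hkey : ∀ x, L x =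
          (∑ j ∈ Finset.range (d+1), c' j * (g x) ^ 2 ^ (k*j)) + r * x := by
        intro x
        have h0 := htel x d 0 (by omega)
        rw [Finset.range_eq_Ico]
        rw [hLdef]
        simp only []
        rw [Finset.range_eq_Ico]
        rw [Finset.sum_eq_sum_Ico_succ_bot (by omega : 0 < d + 2)]
        rw [show (0:ℕ) + 1 = 1 from rfl] at h0
        rw [h0]
        simp only [Nat.mul_zero, pow_zero, pow_one]
        rw [hrdef]
        linear_combination -char2E (a * c' 0 * x)
      -- r = 0
      have hgv : g v = 0 := by
        rw [hgdef]
        simp only [hadef]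
        rw [add_self_eq]
        field_simp
      have hr0 : r = 0 := by
        have h1 := hkey v
        rw [hv0] at h1
        have h2 : ∀ j ∈ Finset.range (d+1), c' j * (g v) ^ 2 ^ (k*j) = 0 := by
          intro j _
          rw [hgv, zero_pow (by positivity), mul_zero]
        rw [Finset.sum_eq_zero h2, zero_add] at h1
        have := h1.symm
        rcases mul_eq_zero.mp this with h | h
        · exact h
        · exact absurd h hvne
      have hkey' : ∀ x, L x = ∑ j ∈ Finset.range (d+1), c' j * (g x) ^ 2 ^ (k*j) := by
        intro x; rw [hkey x, hr0, zero_mul, add_zero]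
      -- L' has a nonzero value
      set L' : GaloisField 2 n → GaloisField 2 n :=
        fun y => ∑ j ∈ Finset.range (d+1), c' j * y ^ 2 ^ (k*j) with hL'def
      have hL' : ∃ y, L' y ≠ 0 := by
        obtain ⟨x0, hx0⟩ := hL
        refine ⟨g x0, ?_⟩
        have hx0' : L x0 ≠ 0 := hx0
        have heq : L' (g x0) = L x0 := (hkey' x0).symm
        rw [heq]
        exact hx0'
      have hBcard := ih c' hL'
      -- fibers of g on the kernel of L
      have hgadd : ∀ x y, g (x + y) = g x + g y := by
        intro x y
        rw [hgdef]; simp only []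
        rw [frob_add]; ring
      have hgker : ∀ w, g w = 0 → w = 0 ∨ w = v := by
        intro w hw
        rcases eq_or_ne w 0 with h | h
        · exact Or.inl h
        · right
          have hww : w ^ 2 ^ k = a * w := by
            rw [hgdef] at hw; simp only [] at hw
            rw [add_self_eq] at hw; exact hw
          have hwv : (w * v⁻¹) ^ 2 ^ k = w * v⁻¹ := by
            rw [mul_pow, hww, hadef]
            have hvv : v ^ 2 ^ k * v⁻¹ ^ 2 ^ k = 1 := by rw [← mul_pow, mul_inv_cancel₀ hvne, one_pow]
            linear_combination (w * v⁻¹) * hvv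
          rcases hfix hn he _ hwv with h1 | h1
          · exfalso
            rcases mul_eq_zero.mp h1 with h2 | h2
            · exact h h2
            · exact hvne (by simpa using inv_eq_zero.mp h2)
          · have : w = v := by
              have hv' : v⁻¹ * v = 1 := inv_mul_cancel₀ hvne
              calc w = w * v⁻¹ * v := by field_simp
                _ = 1 * v := by rw [h1]
                _ = v := one_mul v
            exact this
      -- counting
      set A := Finset.univ.filter (fun x : GaloisField 2 n => L x = 0) with hAdef
      set B := Finset.univ.filter (fun y : GaloisField 2 n => L' y = 0) with hBdef
      have hmaps : ∀ x ∈ A, g x ∈ B := by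
        intro x hx
        rw [hAdef, Finset.mem_filter] at hx
        rw [hBdef, Finset.mem_filter]
        refine ⟨Finset.mem_univ _, ?_⟩
        rw [hL'def]
        simp only []
        rw [← hkey' x]
        exact hx.2
      have hcount : A.card = ∑ y ∈ B, (A.filter (fun x => g x = y)).card :=
        Finset.card_eq_sum_card_fiberwise hmaps
      have hfib : ∀ y ∈ B, (A.filter (fun x => g x = y)).card ≤ 2 := by
        intro y _
        rcases (A.filter (fun x => g x = y)).eq_empty_or_nonempty with h | ⟨x0, hx0⟩
        · rw [h]; simp
        · have hsub : A.filter (fun x => g x = y) ⊆ {x0, x0 + v} := by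
            intro x hx
            rw [Finset.mem_filter] at hx hx0
            have hgg : g (x + x0) = 0 := by
              rw [hgadd, hx.2, hx0.2, char2E]
            rcases hgker _ hgg with h1 | h1
            · have : x = x0 := (add_self_eq x x0).mp h1
              simp [this]
            · have : x = x0 + v := by
                have : x + x0 + x0 = v + x0 := by rw [h1]
                calc x = x + (x0 + x0) := by rw [char2E, add_zero]
                  _ = (x + x0) + x0 := by ring
                  _ = v + x0 := by rw [h1]
                  _ = x0 + v := by ring
              simp [this]
          calc (A.filter (fun x => g x = y)).card ≤ ({x0, x0 + v} : Finset _).card :=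
              Finset.card_le_card hsub
            _ ≤ 2 := Finset.card_insert_le _ _ |>.trans (by simp)
      calc A.card = ∑ y ∈ B, (A.filter (fun x => g x = y)).card := hcount
        _ ≤ ∑ _y ∈ B, 2 := Finset.sum_le_sum hfib
        _ = B.card * 2 := by rw [Finset.sum_const, smul_eq_mul]
        _ ≤ 2 ^ d * 2 := Nat.mul_le_mul_right 2 hBcard
        _ = 2 ^ (d+1) := by ring

/-- The index set for the quadratic part. -/
def Pset (n : ℕ) : Finset (ℕ × ℕ) :=
  (Finset.range n ×ˢ Finset.range n).filter (fun p => p.1 < p.2)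

/-- The function `G`. -/
noncomputable def Gf (n k : ℕ) (a : ℕ → ℕ → GaloisField 2 n) (x : GaloisField 2 n) :
    GaloisField 2 n :=
  x ^ (2 ^ (2 * k) + 2 ^ k + 1) + ∑ p ∈ Pset n, a p.1 p.2 * x ^ (2 ^ p.1 + 2 ^ p.2)

/-- The derivative `G(y+u) - G(y)`. -/
noncomputable def Df (n k : ℕ) (a : ℕ → ℕ → GaloisField 2 n) (u y : GaloisField 2 n) :
    GaloisField 2 n :=
  u * y ^ (2^(2*k) + 2^k) + u^(2^k) * y ^ (2^(2*k) + 1) + u^(2^(2*k)) * y ^ (2^k + 1)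
    + u^(2^k + 1) * y ^ (2^(2*k)) + u^(2^(2*k) + 1) * y ^ (2^k) + u^(2^(2*k) + 2^k) * y
    + u^(2^(2*k) + 2^k + 1)
    + ∑ p ∈ Pset n, a p.1 p.2 *
        (u^(2^p.1) * y^(2^p.2) + u^(2^p.2) * y^(2^p.1) + u^(2^p.1 + 2^p.2))

/-- The bilinear cross term. -/
noncomputable def Tf (n k : ℕ) (u x w : GaloisField 2 n) : GaloisField 2 n :=
  u * (x^(2^(2*k)) * w^(2^k) + w^(2^(2*k)) * x^(2^k))
    + u^(2^k) * (x^(2^(2*k)) * w + w^(2^(2*k)) * x)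
    + u^(2^(2*k)) * (x^(2^k) * w + w^(2^k) * x)

/-- The `x`-free part of the second difference. -/
noncomputable def Θf (n k : ℕ) (a : ℕ → ℕ → GaloisField 2 n) (u w : GaloisField 2 n) :
    GaloisField 2 n :=
  u * w ^ (2^(2*k) + 2^k) + u^(2^k) * w ^ (2^(2*k) + 1) + u^(2^(2*k)) * w ^ (2^k + 1)
    + u^(2^k + 1) * w ^ (2^(2*k)) + u^(2^(2*k) + 1) * w ^ (2^k) + u^(2^(2*k) + 2^k) * w
    + ∑ p ∈ Pset n, a p.1 p.2 * (u^(2^p.1) * w^(2^p.2) + u^(2^p.2) * w^(2^p.1))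

noncomputable def αf (n k : ℕ) (u v w : GaloisField 2 n) : GaloisField 2 n :=
  (v * u) * w^(2^k) + (v * u^(2^k)) * w^(2^0)

noncomputable def βf (n k : ℕ) (u v w : GaloisField 2 n) : GaloisField 2 n :=
  (v * u) * w^(2^(2*k)) + (v * u^(2^(2*k))) * w^(2^0)

noncomputable def γf (n k : ℕ) (u v w : GaloisField 2 n) : GaloisField 2 n :=
  (v * u^(2^k)) * w^(2^(2*k)) + (v * u^(2^(2*k))) * w^(2^k)

noncomputable def Mf (n k : ℕ) (u v w : GaloisField 2 n) : GaloisField 2 n :=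
  (αf n k u v w)^(2^((n - (2*k) % n) % n)) + (βf n k u v w)^(2^((n - k % n) % n))
    + γf n k u v w

lemma I1 (k : ℕ) (a : ℕ → ℕ → GaloisField 2 n) (u y : GaloisField 2 n) :
    Gf n k a (y + u) = Gf n k a y + Df n k a u y := by
  unfold Gf Df
  have hkas : (y+u) ^ (2^(2*k) + 2^k + 1)
      = y ^ (2^(2*k) + 2^k + 1)
        + (u * y ^ (2^(2*k) + 2^k) + u^(2^k) * y ^ (2^(2*k) + 1) + u^(2^(2*k)) * y ^ (2^k + 1)
          + u^(2^k + 1) * y ^ (2^(2*k)) + u^(2^(2*k) + 1) * y ^ (2^k)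
          + u^(2^(2*k) + 2^k) * y + u^(2^(2*k) + 2^k + 1)) := by
    simp only [pow_add, pow_one, frob_add]
    ring
  have hsum : ∑ p ∈ Pset n, a p.1 p.2 * (y+u) ^ (2 ^ p.1 + 2 ^ p.2)
      = ∑ p ∈ Pset n, a p.1 p.2 * y ^ (2 ^ p.1 + 2 ^ p.2)
        + ∑ p ∈ Pset n, a p.1 p.2 *
            (u^(2^p.1) * y^(2^p.2) + u^(2^p.2) * y^(2^p.1) + u^(2^p.1 + 2^p.2)) := by
    rw [← Finset.sum_add_distrib]
    apply Finset.sum_congr rfl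
    intro p _
    simp only [pow_add, frob_add]
    ring
  rw [hkas, hsum]
  ring

lemma I2 (k : ℕ) (a : ℕ → ℕ → GaloisField 2 n) (u x w : GaloisField 2 n) :
    Df n k a u (x + w) = Df n k a u x + Tf n k u x w + Θf n k a u w := by
  unfold Df Tf Θf
  have hsum : ∑ p ∈ Pset n, a p.1 p.2 *
      (u^(2^p.1) * (x+w)^(2^p.2) + u^(2^p.2) * (x+w)^(2^p.1) + u^(2^p.1 + 2^p.2))
      = ∑ p ∈ Pset n, a p.1 p.2 *
          (u^(2^p.1) * x^(2^p.2) + u^(2^p.2) * x^(2^p.1) + u^(2^p.1 + 2^p.2))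
        + ∑ p ∈ Pset n, a p.1 p.2 * (u^(2^p.1) * w^(2^p.2) + u^(2^p.2) * w^(2^p.1)) := by
    rw [← Finset.sum_add_distrib]
    apply Finset.sum_congr rfl
    intro p _
    simp only [frob_add]
    ring
  rw [hsum]
  simp only [pow_add, pow_one, frob_add]
  ring

lemma Igroup (k : ℕ) (u v x w : GaloisField 2 n) :
    v * Tf n k u x w
      = x^(2^(2*k)) * αf n k u v w + x^(2^k) * βf n k u v w + x^(2^0) * γf n k u v w := by
  unfold Tf αf βf γf
  simp only [pow_zero, pow_one]
  ring

-- generic frobenius-power helper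
lemma hpow2 (c1 c2 z : GaloisField 2 n) (e1 e2 s : ℕ) :
    (c1 * z^(2^e1) + c2 * z^(2^e2))^(2^s)
      = c1^(2^s) * z^(2^(e1+s)) + c2^(2^s) * z^(2^(e2+s)) := by
  rw [frob_add, mul_pow, mul_pow, ← pow_pow_add, ← pow_pow_add]

lemma mod_mod (a m : ℕ) : a % m % m = a % m := Nat.mod_mod_of_dvd _ dvd_rfl

lemma inv_exp (hn : 0 < n) (s : ℕ) : ((n - s % n) % n + s) % n = 0 := by
  rcases eq_or_ne (s % n) 0 with h | h
  · rw [h, Nat.sub_zero, Nat.mod_self, Nat.zero_add, h]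
  · have hlt : s % n < n := Nat.mod_lt _ hn
    have h2 : (n - s % n) % n = n - s % n := Nat.mod_eq_of_lt (by omega)
    rw [Nat.add_mod, mod_mod, h2, show n - s % n + s % n = n from by omega, Nat.mod_self]

lemma mod_add_congr {s t : ℕ} (h : s % n = t % n) (b : ℕ) : (b + s) % n = (b + t) % n := by
  rw [Nat.add_mod, h, ← Nat.add_mod]

/-- canonical coefficients of the `σ`-polynomial `(M ∘ frob^{2k})`. -/
noncomputable def cf (n k : ℕ) (u v : GaloisField 2 n) : ℕ → GaloisField 2 n := fun i =>
  if i = 0 then (v * u^(2^k))^(2^((n - (2*k) % n) % n + 2*k))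
  else if i = 1 then (v*u)^(2^((n - (2*k) % n) % n + 2*k))
      + (v * u^(2^(2*k)))^(2^((n - k % n) % n + 2*k))
  else if i = 3 then (v*u)^(2^((n - k % n) % n + 2*k)) + (v * u^(2^(2*k)))^(2^(2*k))
  else if i = 4 then (v * u^(2^k))^(2^(2*k))
  else 0

lemma Mexpand (hn : 0 < n) (k : ℕ) (u v w : GaloisField 2 n) :
    (Mf n k u v w)^(2^(2*k)) = ∑ i ∈ Finset.range 5, cf n k u v i * w ^ 2 ^ (k * i) := by
  set t2 := (n - (2*k) % n) % n with ht2
  set t1 := (n - k % n) % n with ht1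
  have hs2 : (t2 + 2*k) % n = 0 := inv_exp hn (2*k)
  have hs1 : (t1 + 2*k) % n = ((t1 + k) + k) % n := by ring_nf
  have hs1' : (t1 + k) % n = 0 := inv_exp hn k
  -- expand LHS
  have step1 : (Mf n k u v w)^(2^(2*k))
      = (αf n k u v w)^(2^(t2 + 2*k)) + (βf n k u v w)^(2^(t1 + 2*k))
        + (γf n k u v w)^(2^(2*k)) := by
    unfold Mf
    rw [frob_add, frob_add, ← pow_pow_add, ← pow_pow_add]
  rw [step1]
  unfold αf βf γf
  rw [hpow2, hpow2, hpow2]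
  -- canonicalize the w-exponents
  have e0 : w ^ 2 ^ (0 + (t2 + 2*k)) = w ^ 2 ^ (k * 0) := by
    apply pow_congr_mod hn
    rw [Nat.zero_add, hs2, Nat.mul_zero, Nat.zero_mod]
  have e1 : w ^ 2 ^ (k + (t2 + 2*k)) = w ^ 2 ^ (k * 1) := by
    apply pow_congr_mod hn
    rw [Nat.add_mod, hs2, Nat.add_zero, mod_mod, Nat.mul_one]
  have e1' : w ^ 2 ^ (0 + (t1 + 2*k)) = w ^ 2 ^ (k * 1) := by
    apply pow_congr_mod hn
    rw [Nat.zero_add, Nat.mul_one, show t1 + 2*k = k + (t1 + k) from by ring,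
      Nat.add_mod, hs1', Nat.add_zero, mod_mod]
  have e3 : w ^ 2 ^ (2*k + (t1 + 2*k)) = w ^ 2 ^ (k * 3) := by
    apply pow_congr_mod hn
    rw [show 2*k + (t1 + 2*k) = 3*k + (t1 + k) from by ring, Nat.add_mod, hs1',
      Nat.add_zero, mod_mod, show 3*k = k*3 from by ring]
  have e3' : w ^ 2 ^ (k + 2*k) = w ^ 2 ^ (k * 3) := by
    apply pow_congr_mod hn
    rw [show k + 2*k = k*3 from by ring]
  have e4 : w ^ 2 ^ (2*k + 2*k) = w ^ 2 ^ (k * 4) := by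
    apply pow_congr_mod hn
    rw [show 2*k + 2*k = k*4 from by ring]
  rw [e0, e1, e1', e3, e3', e4]
  rw [Finset.sum_range_succ, Finset.sum_range_succ, Finset.sum_range_succ,
    Finset.sum_range_succ, Finset.sum_range_one]
  simp only [cf]
  norm_num
  ring


lemma htr_shift (hn : 0 < n) (s : ℕ) (x c : GaloisField 2 n) :
    trF2 n (x ^ 2 ^ s * c) = trF2 n (x * c ^ 2 ^ ((n - s % n) % n)) := by
  set t := (n - s % n) % n with htdef
  have hst : (s + t) % n = 0 := by rw [Nat.add_comm]; exact inv_exp hn s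
  have h2 : (x ^ 2 ^ s * c) ^ 2 ^ t = x * c ^ 2 ^ t := by
    rw [mul_pow, ← pow_pow_add]
    congr 1
    rw [pow_red hn x (s + t), hst, pow_zero, pow_one]
  rw [← tr_pow_pow (x ^ 2 ^ s * c) t, h2]

/-- the character `(-1)^{(·).val}`. -/
def eps (z : ZMod 2) : ℤ := (-1 : ℤ) ^ z.val

lemma eps_add : ∀ s t : ZMod 2, eps (s + t) = eps s * eps t := by decide
lemma eps_zero : eps 0 = 1 := by decide
lemma eps_flip : ∀ s : ZMod 2, eps (s + 1) = -eps s := by decide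
lemma eps_ite : ∀ s : ZMod 2, eps s = if s = 0 then 1 else -1 := by decide
lemma zmod_ne_one : ∀ s : ZMod 2, s ≠ 1 → s = 0 := by decide
lemma zmod_ne_zero : ∀ s : ZMod 2, s ≠ 0 → s = 1 := by decide
lemma zmod_add_self : ∀ s : ZMod 2, s + s = 0 := by decide

lemma char_sum (z : GaloisField 2 n) (hz : z ≠ 0) :
    ∑ x : GaloisField 2 n, eps (trF2 n (x * z)) = 0 := by
  obtain ⟨x1, hx1⟩ : ∃ x1, trF2 n (x1 * z) = 1 := by
    by_contra hcon
    push_neg at hcon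
    exact hz (tr_nondeg z (fun x => zmod_ne_one _ (hcon x)))
  have hre : ∑ x : GaloisField 2 n, eps (trF2 n ((x + x1) * z))
      = ∑ x : GaloisField 2 n, eps (trF2 n (x * z)) :=
    Fintype.sum_equiv (Equiv.addRight x1) _ _ (fun x => rfl)
  have hpt : ∀ x : GaloisField 2 n, eps (trF2 n ((x + x1) * z)) = -eps (trF2 n (x * z)) := by
    intro x
    rw [add_mul, tr_add, hx1, eps_flip]
  rw [Finset.sum_congr rfl (fun x _ => hpt x)] at hre
  rw [Finset.sum_neg_distrib] at hre
  omega

lemma sq_classify (hn5 : 5 ≤ n) (k : ℕ) (hk : 0 < k) (he : Nat.gcd k n = 1)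
    (a : ℕ → ℕ → GaloisField 2 n) (u v : GaloisField 2 n) (hu : u ≠ 0) (hv : v ≠ 0)
    (F : GaloisField 2 n → GaloisField 2 n) (hF : ∀ x, F x = Gf n k a x) :
    ∃ m : ℕ, m ≤ 4 ∧
      ((2 * dlct n F u v) ^ 2 = 0 ∨ (2 * dlct n F u v) ^ 2 = 2 ^ (n + m)) := by
  have hn : 0 < n := by omega
  set f : GaloisField 2 n → ZMod 2 :=
    fun x => trF2 n (v * (F (x + u) + F x)) with hfdef
  have hGF : ∀ y, F (y + u) + F y = Df n k a u y := by
    intro y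
    rw [hF, hF, I1 k a u y]
    linear_combination char2E (Gf n k a y)
  have hfΔ : ∀ y, f y = trF2 n (v * Df n k a u y) := by
    intro y
    rw [hfdef]
    simp only []
    rw [hGF]
  set cc : GaloisField 2 n → ZMod 2 := fun w => trF2 n (v * Θf n k a u w) with hccdef
  have htrT : ∀ x w, trF2 n (v * Tf n k u x w) = trF2 n (x * Mf n k u v w) := by
    intro x w
    rw [Igroup]
    rw [tr_add, tr_add]
    rw [htr_shift hn (2*k), htr_shift hn k, htr_shift hn 0]
    rw [show (n - 0 % n) % n = 0 from by simp, show (2:ℕ)^0 = 1 from rfl, pow_one]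
    rw [← tr_add, ← tr_add, ← mul_add, ← mul_add]
    rfl
  have hdiff : ∀ x w, f (x + w) + f x = trF2 n (x * Mf n k u v w) + cc w := by
    intro x w
    rw [hfΔ, hfΔ, I2 k a u x w]
    rw [show v * (Df n k a u x + Tf n k u x w + Θf n k a u w)
        = v * Df n k a u x + v * Tf n k u x w + v * Θf n k a u w from by ring]
    rw [tr_add, tr_add, htrT]
    have hz := zmod_add_self (trF2 n (v * Df n k a u x))
    linear_combination hz
  have hccf : ∀ w, cc w = f w + f 0 := by
    intro w
    have h := hdiff 0 w
    rw [zero_add, zero_mul, tr_zero, zero_add] at h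
    rw [← h]
  have hMadd : ∀ w1 w2, Mf n k u v (w1 + w2) = Mf n k u v w1 + Mf n k u v w2 := by
    intro w1 w2
    have hα : αf n k u v (w1 + w2) = αf n k u v w1 + αf n k u v w2 := by
      unfold αf; rw [frob_add, frob_add]; ring
    have hβ : βf n k u v (w1 + w2) = βf n k u v w1 + βf n k u v w2 := by
      unfold βf; rw [frob_add, frob_add]; ring
    have hγ : γf n k u v (w1 + w2) = γf n k u v w1 + γf n k u v w2 := by
      unfold γf; rw [frob_add, frob_add]; ring
    unfold Mf
    rw [hα, hβ, hγ, frob_add, frob_add]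
    ring
  have hccadd : ∀ w w0, Mf n k u v w0 = 0 → cc (w + w0) = cc w + cc w0 := by
    intro w w0 hM0
    have h := hdiff w w0
    rw [hM0, mul_zero, tr_zero, zero_add] at h
    have h1 := hccf (w + w0)
    have h2 := hccf w
    linear_combination h1 - h2 + h - zmod_add_self (f w)
  set R := Finset.univ.filter (fun w : GaloisField 2 n => Mf n k u v w = 0) with hRdef
  -- kernel is small
  have hMC : ∀ w, Mf n k u v w = 0 ↔
      ∑ i ∈ Finset.range 5, cf n k u v i * w ^ 2 ^ (k * i) = 0 := by
    intro w
    have hb := Mexpand hn k u v w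
    constructor
    · intro h0
      rw [← hb, h0, zero_pow (by positivity)]
    · intro h0
      rw [h0] at hb
      exact pow_eq_zero_iff (n := 2^(2*k)) (by positivity) |>.mp hb
  have hcf0 : cf n k u v 0 ≠ 0 := by
    unfold cf
    simp only [if_pos rfl]
    exact pow_ne_zero _ (mul_ne_zero hv (pow_ne_zero _ hu))
  have hexists : ∃ x : GaloisField 2 n,
      ∑ i ∈ Finset.range 5, cf n k u v i * x ^ 2 ^ (k * i) ≠ 0 := by
    by_contra hall
    push_neg at hall
    set P : Polynomial (GaloisField 2 n) :=
      ∑ i ∈ Finset.range 5, Polynomial.C (cf n k u v i) * Polynomial.X ^ (2 ^ ((k * i) % n))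
      with hPdef
    have hPeval : ∀ x, P.eval x = 0 := by
      intro x
      rw [hPdef]
      rw [Polynomial.eval_finset_sum]
      simp only [Polynomial.eval_mul, Polynomial.eval_C, Polynomial.eval_pow, Polynomial.eval_X]
      rw [Finset.sum_congr rfl (fun i _ => by rw [← pow_red hn x (k * i)])]
      exact hall x
    have hexp_ne : ∀ i, i ∈ Finset.range 5 → i ≠ 0 → (2:ℕ) ^ ((k * i) % n) ≠ 1 := by
      intro i hir hi0
      intro hcon
      have h1 : (k * i) % n = 0 := by
        by_contra hne
        have : (2:ℕ) ^ ((k * i) % n) ≥ 2 := by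
          calc (2:ℕ) ^ ((k*i) % n) ≥ 2^1 := Nat.pow_le_pow_right (by norm_num) (by omega)
            _ = 2 := by norm_num
        omega
      have h2 : n ∣ k * i := Nat.dvd_of_mod_eq_zero h1
      have h3 : n ∣ i := (Nat.Coprime.dvd_of_dvd_mul_left (Nat.coprime_comm.mp he) h2)
      have hi5 : i < 5 := Finset.mem_range.mp hir
      exact hi0 (Nat.eq_zero_of_dvd_of_lt h3 (by omega))
    have hcoeff : P.coeff 1 = cf n k u v 0 := by
      rw [hPdef, Polynomial.finset_sum_coeff]
      rw [Finset.sum_eq_single 0]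
      · simp [Polynomial.coeff_C_mul, Polynomial.coeff_X_pow]
      · intro i hi hi0
        rw [Polynomial.coeff_C_mul, Polynomial.coeff_X_pow]
        rw [if_neg (fun hcon => hexp_ne i hi hi0 hcon.symm), mul_zero]
      · intro h; exact absurd (by norm_num) h
    have hPne : P ≠ 0 := by
      intro h0
      rw [h0, Polynomial.coeff_zero] at hcoeff
      exact hcf0 hcoeff.symm
    have hdeg : P.natDegree < 2 ^ n := by
      have h1 : P.natDegree ≤ 2 ^ (n-1) := by
        rw [hPdef]
        apply Polynomial.natDegree_sum_le_of_forall_le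
        intro i _
        calc (Polynomial.C (cf n k u v i) * Polynomial.X ^ (2 ^ ((k * i) % n))).natDegree
            ≤ 2 ^ ((k * i) % n) := Polynomial.natDegree_C_mul_X_pow_le _ _
          _ ≤ 2 ^ (n - 1) := Nat.pow_le_pow_right (by norm_num)
              (by have := Nat.mod_lt (k*i) hn; omega)
      calc P.natDegree ≤ 2^(n-1) := h1
        _ < 2^n := Nat.pow_lt_pow_right (by norm_num) (by omega)
    -- too many roots
    have hroots : (Finset.univ : Finset (GaloisField 2 n)) ⊆ P.roots.toFinset := by
      intro x _
      rw [Multiset.mem_toFinset, Polynomial.mem_roots hPne]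
      exact hPeval x
    have hcard : (2:ℕ) ^ n ≤ P.natDegree := by
      calc (2:ℕ)^n = Fintype.card (GaloisField 2 n) := (Ecard hn).symm
        _ = (Finset.univ : Finset (GaloisField 2 n)).card := rfl
        _ ≤ P.roots.toFinset.card := Finset.card_le_card hroots
        _ ≤ Multiset.card P.roots := Multiset.toFinset_card_le _
        _ ≤ P.natDegree := Polynomial.card_roots' P
    omega
  have hR16 : R.card ≤ 2 ^ 4 := by
    have hRe : R = Finset.univ.filter
        (fun w => ∑ i ∈ Finset.range 5, cf n k u v i * w ^ 2 ^ (k * i) = 0) := by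
      apply Finset.filter_congr
      intro w _
      exact hMC w
    rw [hRe]
    exact ore hn he 4 (cf n k u v) hexists
  -- kernel is a subgroup: card is a power of two
  have hRcard_dvd : R.card ∣ 2 ^ n := by
    set Mhom : GaloisField 2 n →+ GaloisField 2 n :=
      AddMonoidHom.mk' (Mf n k u v) hMadd with hMhom
    have h1 : (Nat.card Mhom.ker) ∣ Nat.card (GaloisField 2 n) :=
      AddSubgroup.card_addSubgroup_dvd_card _
    have h2 : Nat.card Mhom.ker = R.card := by
      rw [hRdef]
      rw [Nat.card_congr (Equiv.subtypeEquivRight (q := fun w => Mf n k u v w = 0)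
        (fun w => by rw [AddMonoidHom.mem_ker]; rfl))]
      rw [Nat.card_eq_fintype_card, Fintype.card_subtype]
    rw [GaloisField.card 2 n hn.ne'] at h1
    rw [← h2]
    exact h1
  obtain ⟨m, hmle, hmcard⟩ : ∃ m, m ≤ n ∧ R.card = 2 ^ m :=
    (Nat.dvd_prime_pow Nat.prime_two).mp hRcard_dvd
  have hm4 : m ≤ 4 := by
    have := hR16
    rw [hmcard] at this
    exact (Nat.pow_le_pow_iff_right (by norm_num)).mp this
  -- the sum over x of eps(f x)
  set S : ℤ := ∑ x : GaloisField 2 n, eps (f x) with hSdef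
  have hSS : S * S = (∑ w ∈ R, eps (cc w)) * 2 ^ n := by
    rw [hSdef, Finset.sum_mul_sum]
    have hinner : ∀ x : GaloisField 2 n,
        ∑ y : GaloisField 2 n, eps (f x) * eps (f y)
          = ∑ w : GaloisField 2 n, eps (f x) * eps (f (x + w)) := by
      intro x
      exact (Fintype.sum_equiv (Equiv.addLeft x) _ _ (fun w => rfl)).symm
    rw [Finset.sum_congr rfl (fun x _ => hinner x)]
    have hpt : ∀ x w : GaloisField 2 n,
        eps (f x) * eps (f (x + w)) = eps (trF2 n (x * Mf n k u v w)) * eps (cc w) := by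
      intro x w
      rw [← eps_add, ← eps_add]
      congr 1
      rw [add_comm (f x) (f (x+w))]
      exact hdiff x w
    rw [Finset.sum_congr rfl (fun x _ => Finset.sum_congr rfl (fun w _ => hpt x w))]
    rw [Finset.sum_comm]
    have hinner2 : ∀ w : GaloisField 2 n,
        ∑ x : GaloisField 2 n, eps (trF2 n (x * Mf n k u v w)) * eps (cc w)
          = (if Mf n k u v w = 0 then (2:ℤ)^n else 0) * eps (cc w) := by
      intro w
      rw [← Finset.sum_mul]
      congr 1
      by_cases hMw : Mf n k u v w = 0
      · rw [if_pos hMw]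
        have : ∀ x : GaloisField 2 n, eps (trF2 n (x * Mf n k u v w)) = 1 := by
          intro x
          rw [hMw, mul_zero, tr_zero, eps_zero]
        rw [Finset.sum_congr rfl (fun x _ => this x), Finset.sum_const]
        rw [Finset.card_univ, Ecard hn]
        simp
      · rw [if_neg hMw]
        exact char_sum _ hMw
    rw [Finset.sum_congr rfl (fun w _ => hinner2 w)]
    rw [← Finset.sum_filter_add_sum_filter_not Finset.univ (fun w => Mf n k u v w = 0)]
    rw [← hRdef]
    have hz : ∀ w ∈ Finset.univ.filter (fun w : GaloisField 2 n => ¬(Mf n k u v w = 0)),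
        (if Mf n k u v w = 0 then (2:ℤ)^n else 0) * eps (cc w) = 0 := by
      intro w hw
      rw [Finset.mem_filter] at hw
      rw [if_neg hw.2, zero_mul]
    rw [Finset.sum_congr rfl hz, Finset.sum_const_zero, add_zero]
    rw [Finset.sum_mul]
    apply Finset.sum_congr rfl
    intro w hw
    rw [hRdef, Finset.mem_filter] at hw
    rw [if_pos hw.2]
    ring
  have hgroup : (∑ w ∈ R, eps (cc w)) = 0 ∨ (∑ w ∈ R, eps (cc w)) = R.card := by
    by_cases hcc : ∀ w ∈ R, cc w = 0
    · right
      rw [Finset.sum_congr rfl (fun w hw => by rw [hcc w hw, eps_zero])]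
      simp
    · left
      push_neg at hcc
      obtain ⟨w0, hw0R, hw0⟩ := hcc
      have hw0' : cc w0 = 1 := zmod_ne_zero _ hw0
      have hMw0 : Mf n k u v w0 = 0 := by
        rw [hRdef, Finset.mem_filter] at hw0R
        exact hw0R.2
      have hre : ∑ w ∈ R, eps (cc w) = ∑ w ∈ R, eps (cc (w + w0)) := by
        apply Finset.sum_nbij' (fun w => w + w0) (fun w => w + w0)
        · intro w hw
          rw [hRdef, Finset.mem_filter] at hw ⊢
          exact ⟨Finset.mem_univ _, by rw [hMadd, hw.2, hMw0, add_zero]⟩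
        · intro w hw
          rw [hRdef, Finset.mem_filter] at hw ⊢
          exact ⟨Finset.mem_univ _, by rw [hMadd, hw.2, hMw0, add_zero]⟩
        · intro w _
          rw [add_assoc, char2E, add_zero]
        · intro w _
          rw [add_assoc, char2E, add_zero]
        · intro w _
          congr 1
          rw [hccadd _ _ hMw0, hccadd _ _ hMw0]
          rw [add_assoc]
          rw [show cc w0 + cc w0 = 0 from zmod_add_self _, add_zero]
      have hre2 : ∑ w ∈ R, eps (cc (w + w0)) = -∑ w ∈ R, eps (cc w) := by
        rw [← Finset.sum_neg_distrib]
        apply Finset.sum_congr rfl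
        intro w hw
        rw [hccadd _ _ hMw0, hw0', eps_flip]
      omega
  -- S = 2 * dlct
  have hS2d : S = 2 * dlct n F u v := by
    have hNc : (Nat.card {x : GaloisField 2 n // trF2 n (v * (F (x + u) + F x)) = 0} : ℤ)
        = ((Finset.univ.filter (fun x : GaloisField 2 n => f x = 0)).card : ℤ) := by
      congr 1
      rw [Nat.card_eq_fintype_card, Fintype.card_subtype]
    have hsp : S = ((Finset.univ.filter (fun x : GaloisField 2 n => f x = 0)).card : ℤ)
        - ((Finset.univ.filter (fun x : GaloisField 2 n => ¬ (f x = 0))).card : ℤ) := by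
      rw [hSdef]
      rw [Finset.sum_congr rfl (fun x _ => eps_ite (f x))]
      rw [Finset.sum_ite]
      simp only [Finset.sum_const, smul_eq_mul, mul_one, mul_neg]
      push_cast
      ring
    have hto : (Finset.univ.filter (fun x : GaloisField 2 n => f x = 0)).card
        + (Finset.univ.filter (fun x : GaloisField 2 n => ¬ (f x = 0))).card = 2^n := by
      rw [Finset.card_filter_add_card_filter_not, ← Ecard hn]
      rfl
    unfold dlct
    rw [hNc]
    have h2n : (2:ℤ)^n = 2^(n-1) * 2 := by
      rw [← pow_succ]
      congr 1
      omega
    have hto' : ((Finset.univ.filter (fun x : GaloisField 2 n => f x = 0)).card : ℤ)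
        + ((Finset.univ.filter (fun x : GaloisField 2 n => ¬ (f x = 0))).card : ℤ) = 2^n := by
      exact_mod_cast congrArg (Nat.cast : ℕ → ℤ) hto
    rw [hsp]
    linarith [hto', h2n]
  refine ⟨m, hm4, ?_⟩
  rcases hgroup with h0 | hcard
  · left
    rw [← hS2d, sq, hSS, h0, zero_mul]
  · right
    rw [← hS2d, sq, hSS, hcard, hmcard]
    push_cast
    rw [← pow_add]
    rw [Nat.add_comm m n]


lemma dlct_trivial (hn : 0 < n) (F : GaloisField 2 n → GaloisField 2 n)
    (u v : GaloisField 2 n) : (dlct n F u v).natAbs ≤ 2 ^ (n-1) := by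
  unfold dlct
  have hN : Nat.card {x : GaloisField 2 n // trF2 n (v * (F (x + u) + F x)) = 0} ≤ 2^n := by
    rw [Nat.card_eq_fintype_card]
    calc Fintype.card {x : GaloisField 2 n // trF2 n (v * (F (x + u) + F x)) = 0}
        ≤ Fintype.card (GaloisField 2 n) := Fintype.card_subtype_le _
      _ = 2^n := Ecard hn
  have h2 : (2:ℤ)^n = 2^(n-1) * 2 := by rw [← pow_succ]; congr 1; omega
  have hcast : (((2:ℕ)^(n-1) : ℕ) : ℤ) = (2:ℤ)^(n-1) := by push_cast; ring
  have hNc : ((Nat.card {x : GaloisField 2 n // trF2 n (v * (F (x + u) + F x)) = 0} : ℕ) : ℤ)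
      ≤ (2:ℤ)^n := by exact_mod_cast hN
  omega

lemma pair_bound (hn : 0 < n) {k : ℕ} (hk : 0 < k) (he : Nat.gcd k n = 1)
    (a : ℕ → ℕ → GaloisField 2 n) (u v : GaloisField 2 n) (hu : u ≠ 0) (hv : v ≠ 0)
    (F : GaloisField 2 n → GaloisField 2 n) (hF : ∀ x, F x = Gf n k a x) :
    (Odd n → (dlct n F u v).natAbs ≤ 2 ^ ((n+1)/2)) ∧
    (Even n → (dlct n F u v).natAbs ≤ 2 ^ (n/2+1)) := by
  rcases lt_or_ge n 5 with hsmall | hbig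
  · have htriv := dlct_trivial hn F u v
    constructor
    · intro hodd
      have h1 : n % 2 = 1 := Nat.odd_iff.mp hodd
      calc (dlct n F u v).natAbs ≤ 2^(n-1) := htriv
        _ ≤ 2^((n+1)/2) := Nat.pow_le_pow_right (by norm_num) (by omega)
    · intro heven
      have h1 : n % 2 = 0 := Nat.even_iff.mp heven
      calc (dlct n F u v).natAbs ≤ 2^(n-1) := htriv
        _ ≤ 2^(n/2+1) := Nat.pow_le_pow_right (by norm_num) (by omega)
  · obtain ⟨m, hm4, hcase⟩ := sq_classify hbig k hk he a u v hu hv F hF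
    rcases hcase with h0 | hpow
    · have hd0 : dlct n F u v = 0 := by
        have h1 : 2 * dlct n F u v = 0 := by
          have := sq_eq_zero_iff.mp h0
          exact this
        omega
      constructor <;> intro _ <;> simp [hd0]
    · have hnat : (2 * (dlct n F u v).natAbs)^2 = 2^(n+m) := by
        have hc := congrArg Int.natAbs hpow
        rw [Int.natAbs_pow, Int.natAbs_mul, Int.natAbs_pow] at hc
        simpa using hc
      set t := (dlct n F u v).natAbs with htdef
      have ht_dvd : t ∣ 2^(n+m) := by
        have h1 : t ∣ (2*t)^2 := Dvd.intro (4*t) (by ring)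
        rwa [hnat] at h1
      obtain ⟨j, _hj_le, hjt⟩ := (Nat.dvd_prime_pow Nat.prime_two).mp ht_dvd
      have hexp : 2*j + 2 = n + m := by
        have h1 : (2 * 2^j)^2 = 2^(n+m) := by rw [← hjt]; exact hnat
        have h2 : (2:ℕ)^(2*j+2) = 2^(n+m) := by rw [← h1]; ring
        exact Nat.pow_right_injective (le_refl 2) h2
      constructor
      · intro hodd
        have h1 : n % 2 = 1 := Nat.odd_iff.mp hodd
        have hj : j ≤ (n+1)/2 := by omega
        calc t = 2^j := hjt
          _ ≤ 2^((n+1)/2) := Nat.pow_le_pow_right (by norm_num) hj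
      · intro heven
        have h1 : n % 2 = 0 := Nat.even_iff.mp heven
        have hj : j ≤ n/2 + 1 := by omega
        calc t = 2^j := hjt
          _ ≤ 2^(n/2+1) := Nat.pow_le_pow_right (by norm_num) hj

end DLUProof

/-- Corollary: for `G(x) = x^{2^{2k}+2^k+1} + Σ_{0 ≤ i < j ≤ n-1} a_{ij} x^{2^i+2^j}` on
`F_{2^n}` with `gcd(k,n) = 1`, `DLU_G ≤ 2^{(n+1)/2}` if `n` is odd and
`DLU_G ≤ 2^{n/2+1}` if `n` is even. -/
theorem stmt8 (n k : ℕ) (hn : 0 < n) (hk : 0 < k) (he : Nat.gcd k n = 1)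
    (a : ℕ → ℕ → GaloisField 2 n) :
    (Odd n →
      dlu n (fun x : GaloisField 2 n =>
          x ^ (2 ^ (2 * k) + 2 ^ k + 1) +
            ∑ p ∈ (Finset.range n ×ˢ Finset.range n).filter (fun p => p.1 < p.2),
              a p.1 p.2 * x ^ (2 ^ p.1 + 2 ^ p.2)) ≤
        2 ^ ((n + 1) / 2)) ∧
    (Even n →
      dlu n (fun x : GaloisField 2 n =>
          x ^ (2 ^ (2 * k) + 2 ^ k + 1) +
            ∑ p ∈ (Finset.range n ×ˢ Finset.range n).filter (fun p => p.1 < p.2),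
              a p.1 p.2 * x ^ (2 ^ p.1 + 2 ^ p.2)) ≤
        2 ^ (n / 2 + 1)) := by
  have hmain := fun (u v : GaloisField 2 n) (hu : u ≠ 0) (hv : v ≠ 0) =>
    DLUProof.pair_bound hn hk he a u v hu hv _ (fun x => rfl)
  constructor
  · intro hodd
    apply Finset.sup_le
    intro p hp
    rw [Finset.mem_filter] at hp
    exact (hmain p.1 p.2 hp.2.1 hp.2.2).1 hodd
  · intro heven
    apply Finset.sup_le
    intro p hp
    rw [Finset.mem_filter] at hp
    exact (hmain p.1 p.2 hp.2.1 hp.2.2).2 heven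
end

section
/- Let F : F_{2^n} → F_{2^n} and F_1, ..., F_t : F_{2^n} → F_{2^n} be functions, and let ξ_1, ..., ξ_t be t distinct elements of F_{2^n}. Define f : F_{2^n} → F_{2^n} by f(x) = F(x) if x ∉ {ξ_1, ..., ξ_t}, and f(ξ_i) = F_i(ξ_i) for i = 1, ..., t. Then DLU_f ≤ DLU_F + 2t. -/
open scoped BigOperators Classical

/-- Theorem: if `f` agrees with `F` outside `t` distinct points `ξ₁, …, ξ_t`, where
`f(ξᵢ) = Fᵢ(ξᵢ)`, then `DLU_f ≤ DLU_F + 2t`. -/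
lemma dlct_card (n : ℕ) (G : GaloisField 2 n → GaloisField 2 n) (u v : GaloisField 2 n) :
    dlct n G u v =
      ((Finset.univ.filter (fun x : GaloisField 2 n =>
        trF2 n (v * (G (x + u) + G x)) = 0)).card : ℤ) - 2 ^ (n - 1) := by
  unfold dlct
  congr 1
  rw [Nat.card_eq_fintype_card, Fintype.card_subtype]


/-- Theorem -/
theorem stmt9 (n t : ℕ) (hn : 0 < n)
    (F : GaloisField 2 n → GaloisField 2 n)
    (Fs : Fin t → GaloisField 2 n → GaloisField 2 n)
    (ξ : Fin t → GaloisField 2 n) (hξ : Function.Injective ξ)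
    (f : GaloisField 2 n → GaloisField 2 n)
    (hf : ∀ x : GaloisField 2 n, (∀ i : Fin t, x ≠ ξ i) → f x = F x)
    (hfi : ∀ i : Fin t, f (ξ i) = Fs i (ξ i)) :
    dlu n f ≤ dlu n F + 2 * t := by
  classical
  apply Finset.sup_le
  intro p hp
  simp only [Finset.mem_filter, Finset.mem_univ, true_and] at hp
  obtain ⟨hu, hv⟩ := hp
  set u := p.1
  set v := p.2
  -- D : points where x is one of the ξ i; D' : points where x + u is one of the ξ i
  set D : Finset (GaloisField 2 n) :=
    Finset.univ.filter (fun x => ∃ i, x = ξ i) with hDdef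
  set D' : Finset (GaloisField 2 n) :=
    Finset.univ.filter (fun x => ∃ i, x + u = ξ i) with hD'def
  have hDcard : D.card ≤ t := by
    have hsub : D ⊆ Finset.univ.image ξ := by
      intro x hx
      simp only [hDdef, Finset.mem_filter, Finset.mem_univ, true_and] at hx
      obtain ⟨i, rfl⟩ := hx
      exact Finset.mem_image_of_mem ξ (Finset.mem_univ i)
    calc D.card ≤ (Finset.univ.image ξ).card := Finset.card_le_card hsub
      _ ≤ (Finset.univ : Finset (Fin t)).card := Finset.card_image_le
      _ = t := by simp
  have hD'card : D'.card ≤ t := by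
    have : D'.card ≤ D.card := by
      apply Finset.card_le_card_of_injOn (fun x => x + u)
      · intro x hx
        simp only [Finset.mem_coe, hDdef, hD'def, Finset.mem_filter, Finset.mem_univ, true_and] at hx ⊢
        exact hx
      · intro a _ b _ hab
        exact add_right_cancel hab
    exact this.trans hDcard
  set T : Finset (GaloisField 2 n) := D ∪ D' with hTdef
  have hTcard : T.card ≤ 2 * t := by
    calc T.card ≤ D.card + D'.card := Finset.card_union_le _ _
      _ ≤ t + t := Nat.add_le_add hDcard hD'card
      _ = 2 * t := (two_mul t).symm
  -- agreement outside T
  have hagree : ∀ x : GaloisField 2 n, x ∉ T →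
      v * (f (x + u) + f x) = v * (F (x + u) + F x) := by
    intro x hx
    simp only [hTdef, hDdef, hD'def, Finset.mem_union, Finset.mem_filter, Finset.mem_univ,
      true_and, not_or, not_exists] at hx
    rw [hf x (fun i => hx.1 i), hf (x + u) (fun i => hx.2 i)]
  set A : Finset (GaloisField 2 n) :=
    Finset.univ.filter (fun x => trF2 n (v * (f (x + u) + f x)) = 0) with hAdef
  set B : Finset (GaloisField 2 n) :=
    Finset.univ.filter (fun x => trF2 n (v * (F (x + u) + F x)) = 0) with hBdef
  have hAB : A ⊆ B ∪ T := by
    intro x hx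
    by_cases hxT : x ∈ T
    · exact Finset.mem_union_right _ hxT
    · apply Finset.mem_union_left
      simp only [hAdef, hBdef, Finset.mem_filter, Finset.mem_univ, true_and] at hx ⊢
      rw [← hagree x hxT]; exact hx
  have hBA : B ⊆ A ∪ T := by
    intro x hx
    by_cases hxT : x ∈ T
    · exact Finset.mem_union_right _ hxT
    · apply Finset.mem_union_left
      simp only [hAdef, hBdef, Finset.mem_filter, Finset.mem_univ, true_and] at hx ⊢
      rw [hagree x hxT]; exact hx
  have hA1 : A.card ≤ B.card + T.card :=
    (Finset.card_le_card hAB).trans (Finset.card_union_le _ _)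
  have hB1 : B.card ≤ A.card + T.card :=
    (Finset.card_le_card hBA).trans (Finset.card_union_le _ _)
  have hdiff : |(A.card : ℤ) - B.card| ≤ (2 * t : ℕ) := by
    rw [abs_le]
    constructor
    · have := (Nat.cast_le (α := ℤ)).2 hB1
      push_cast at this ⊢
      linarith [(Nat.cast_le (α := ℤ)).2 hTcard]
    · have := (Nat.cast_le (α := ℤ)).2 hA1
      push_cast at this ⊢
      linarith [(Nat.cast_le (α := ℤ)).2 hTcard]
  have hdf : dlct n f u v = (A.card : ℤ) - 2 ^ (n - 1) := dlct_card n f u v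
  have hdF : dlct n F u v = (B.card : ℤ) - 2 ^ (n - 1) := dlct_card n F u v
  have key : (dlct n f u v).natAbs ≤ (dlct n F u v).natAbs + 2 * t := by
    have h1 : |dlct n f u v| ≤ |dlct n F u v| + (2 * t : ℕ) := by
      have : dlct n f u v = dlct n F u v + ((A.card : ℤ) - B.card) := by
        rw [hdf, hdF]; ring
      rw [this]
      calc |dlct n F u v + ((A.card : ℤ) - B.card)|
          ≤ |dlct n F u v| + |(A.card : ℤ) - B.card| := abs_add_le _ _
        _ ≤ |dlct n F u v| + (2 * t : ℕ) := by linarith [hdiff]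
    rw [Int.abs_eq_natAbs, Int.abs_eq_natAbs] at h1
    exact_mod_cast h1
  have hle : (dlct n F u v).natAbs ≤ dlu n F := by
    apply Finset.le_sup (f := fun p : GaloisField 2 n × GaloisField 2 n => (dlct n F p.1 p.2).natAbs)
    simp [hu, hv]
    exact ⟨hu, hv⟩
  omega
end

section
/- Let F : F_{2^n} → F_{2^n} and F_1 : F_{2^n} → F_{2^n} be functions and let ξ ∈ F_{2^n}. Define f : F_{2^n} → F_{2^n} by f(x) = F(x) if x ≠ ξ and f(ξ) = F_1(ξ). Then DLU_f ≤ DLU_F + 2. -/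
open scoped BigOperators Classical

lemma aux_card {α : Type*} [Fintype α] (P Q : α → Prop) (a b : α)
    (h : ∀ x, x ≠ a → x ≠ b → (P x ↔ Q x)) :
    (Nat.card {x // P x} : ℤ) ≤ Nat.card {x // Q x} + 2 := by
  classical
  have hP : Nat.card {x // P x} = (Finset.univ.filter P).card := by
    rw [Nat.card_eq_fintype_card, Fintype.card_subtype]
  have hQ : Nat.card {x // Q x} = (Finset.univ.filter Q).card := by
    rw [Nat.card_eq_fintype_card, Fintype.card_subtype]
  have hsub : Finset.univ.filter P ⊆ Finset.univ.filter Q ∪ {a, b} := by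
    intro x hx
    simp only [Finset.mem_filter, Finset.mem_univ, true_and] at hx
    by_cases ha : x = a
    · simp [ha]
    by_cases hb : x = b
    · simp [hb]
    · simp [Finset.mem_union, Finset.mem_filter, (h x ha hb).mp hx]
  have h1 : (Finset.univ.filter P).card ≤ (Finset.univ.filter Q).card + 2 := by
    calc (Finset.univ.filter P).card
        ≤ (Finset.univ.filter Q ∪ {a, b}).card := Finset.card_le_card hsub
      _ ≤ (Finset.univ.filter Q).card + ({a, b} : Finset α).card :=
          Finset.card_union_le _ _
      _ ≤ (Finset.univ.filter Q).card + 2 := by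
          have : ({a, b} : Finset α).card ≤ 2 := by
            apply le_trans (Finset.card_insert_le _ _); simp
          omega
  rw [hP, hQ]; exact_mod_cast h1

/-- Corollary: if `f` agrees with `F` outside a single point `ξ`, where `f(ξ) = F₁(ξ)`,
then `DLU_f ≤ DLU_F + 2`. -/
theorem stmt10 (n : ℕ) (hn : 0 < n)
    (F F₁ : GaloisField 2 n → GaloisField 2 n) (ξ : GaloisField 2 n)
    (f : GaloisField 2 n → GaloisField 2 n)
    (hf : ∀ x : GaloisField 2 n, x ≠ ξ → f x = F x)
    (hfξ : f ξ = F₁ ξ) :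
    dlu n f ≤ dlu n F + 2 := by
  apply Finset.sup_le
  intro p hp
  simp only [Finset.mem_filter, Finset.mem_univ, true_and] at hp
  obtain ⟨hu, hv⟩ := hp
  have hF : (dlct n F p.1 p.2).natAbs ≤ dlu n F := by
    unfold dlu
    have hmem : p ∈ Finset.univ.filter
        (fun q : GaloisField 2 n × GaloisField 2 n => q.1 ≠ 0 ∧ q.2 ≠ 0) :=
      Finset.mem_filter.mpr ⟨Finset.mem_univ _, hu, hv⟩
    exact Finset.le_sup (f := fun q : GaloisField 2 n × GaloisField 2 n => (dlct n F q.1 q.2).natAbs) hmem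
  set u := p.1
  set v := p.2
  have hchar : ∀ x : GaloisField 2 n, x ≠ ξ → x ≠ ξ + u →
      ((trF2 n (v * (f (x + u) + f x)) = 0) ↔ (trF2 n (v * (F (x + u) + F x)) = 0)) := by
    intro x hx1 hx2
    have hxu : x + u ≠ ξ := by
      intro h
      apply hx2
      have : x = ξ - u := eq_sub_of_add_eq h
      rw [this, CharTwo.sub_eq_add]
    rw [hf x hx1, hf (x + u) hxu]
  have key1 : dlct n f u v ≤ dlct n F u v + 2 := by
    unfold dlct
    have h2 : (Nat.card {x : GaloisField 2 n // trF2 n (v * (f (x + u) + f x)) = 0} : ℤ) ≤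
        Nat.card {x : GaloisField 2 n // trF2 n (v * (F (x + u) + F x)) = 0} + 2 :=
      aux_card _ _ _ _ hchar
    omega
  have key2 : dlct n F u v ≤ dlct n f u v + 2 := by
    unfold dlct
    have h2 : (Nat.card {x : GaloisField 2 n // trF2 n (v * (F (x + u) + F x)) = 0} : ℤ) ≤
        Nat.card {x : GaloisField 2 n // trF2 n (v * (f (x + u) + f x)) = 0} + 2 :=
      aux_card _ _ _ _ (fun x h1 h2 => (hchar x h1 h2).symm)
    omega
  omega
end
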